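/- arXiv:2301.03849 — 5 statements merged into one kernel-verified Lean document; each statement's English description precedes it below -/
import Mathlib

section
/- A linear map L : M_{d_A}(ℂ) → M_{d_B}(ℂ) satisfies the covariance condition L(conj(π_A(x)) X π_A(x)ᵀ) = π_B(x) L(X) π_B(x)* for all x ∈ G and X if and only if its Choi matrix C_L = (1/d_A) ∑_{i,j} e_{ij} ⊗ L(e_{ij}) commutes with π_A(x) ⊗ π_B(x) for every x ∈ G. -/
open Matrix Kronecker

private lemma sum_kron_apply {dA dB : ℕ} (M : Fin dA → Fin dA → Matrix (Fin dB) (Fin dB) ℂ)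
    (i j : Fin dA) (p q : Fin dB) :
    (∑ k : Fin dA, ∑ l : Fin dA, Matrix.single k l (1:ℂ) ⊗ₖ M k l) (i,p) (j,q)
      = M i j p q := by
  simp [Matrix.sum_apply, Matrix.single, ite_and]

private lemma extract_blocks {dA dB : ℕ} {M N : Fin dA → Fin dA → Matrix (Fin dB) (Fin dB) ℂ}
    (h : (∑ k : Fin dA, ∑ l : Fin dA, Matrix.single k l (1:ℂ) ⊗ₖ M k l)
       = (∑ k : Fin dA, ∑ l : Fin dA, Matrix.single k l (1:ℂ) ⊗ₖ N k l))
    (i j : Fin dA) : M i j = N i j := by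
  ext p q
  have := congrFun (congrFun h (i,p)) (j,q)
  rwa [sum_kron_apply, sum_kron_apply] at this

private lemma stdA_left {dA : ℕ} (A : Matrix (Fin dA) (Fin dA) ℂ) (i j : Fin dA) :
    Aᵀ * Matrix.single i j (1:ℂ) = ∑ k, A i k • Matrix.single k j (1:ℂ) := by
  ext a b
  simp [Matrix.mul_apply, Matrix.sum_apply, Matrix.single, ite_and, mul_comm]

private lemma stdA_right {dA : ℕ} (A : Matrix (Fin dA) (Fin dA) ℂ) (i j : Fin dA) :
    Matrix.single i j (1:ℂ) * Aᵀ = ∑ l, A l j • Matrix.single i l (1:ℂ) := by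
  ext a b
  simp [Matrix.mul_apply, Matrix.sum_apply, Matrix.single, ite_and]

private lemma left_mul {dA dB : ℕ} (A : Matrix (Fin dA) (Fin dA) ℂ) (B : Matrix (Fin dB) (Fin dB) ℂ)
    (L : Matrix (Fin dA) (Fin dA) ℂ →ₗ[ℂ] Matrix (Fin dB) (Fin dB) ℂ) :
    (A ⊗ₖ B) * (∑ i : Fin dA, ∑ j : Fin dA,
        Matrix.single i j (1:ℂ) ⊗ₖ L (Matrix.single i j (1:ℂ)))
      = ∑ i : Fin dA, ∑ j : Fin dA, Matrix.single i j (1:ℂ) ⊗ₖ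
          (B * L (Aᵀ * Matrix.single i j (1:ℂ))) := by
  ext ⟨i,p⟩ ⟨j,q⟩
  rw [Matrix.mul_apply, sum_kron_apply (fun i j => B * L (Aᵀ * Matrix.single i j 1))]
  simp only [stdA_left, map_sum, _root_.map_smul, Matrix.mul_sum, Matrix.mul_smul,
    Matrix.sum_apply, Matrix.smul_apply, smul_eq_mul, Fintype.sum_prod_type,
    kroneckerMap_apply, sum_kron_apply (fun k l => L (Matrix.single k l 1)),
    Matrix.mul_apply, Finset.mul_sum]
  rw [Finset.sum_comm]
  exact Finset.sum_congr rfl fun k _ => Finset.sum_congr rfl fun r _ => by ring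

private lemma right_mul {dA dB : ℕ} (A : Matrix (Fin dA) (Fin dA) ℂ) (B : Matrix (Fin dB) (Fin dB) ℂ)
    (L : Matrix (Fin dA) (Fin dA) ℂ →ₗ[ℂ] Matrix (Fin dB) (Fin dB) ℂ) :
    (∑ i : Fin dA, ∑ j : Fin dA,
        Matrix.single i j (1:ℂ) ⊗ₖ L (Matrix.single i j (1:ℂ))) * (A ⊗ₖ B)
      = ∑ i : Fin dA, ∑ j : Fin dA, Matrix.single i j (1:ℂ) ⊗ₖ
          (L (Matrix.single i j (1:ℂ) * Aᵀ) * B) := by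
  ext ⟨i,p⟩ ⟨j,q⟩
  rw [Matrix.mul_apply, sum_kron_apply (fun i j => L (Matrix.single i j 1 * Aᵀ) * B)]
  simp only [stdA_right, map_sum, _root_.map_smul, Matrix.sum_mul, Matrix.smul_mul,
    Matrix.sum_apply, Matrix.smul_apply, smul_eq_mul, Fintype.sum_prod_type,
    kroneckerMap_apply, sum_kron_apply (fun k l => L (Matrix.single k l 1)),
    Matrix.mul_apply, Finset.mul_sum, Finset.sum_mul]
  rw [Finset.sum_comm]
  exact Finset.sum_congr rfl fun l _ => Finset.sum_congr rfl fun r _ => by ring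

private lemma std_smul' {dA : ℕ} (i j : Fin dA) (c : ℂ) :
    Matrix.single i j c = c • Matrix.single i j (1:ℂ) := by
  rw [Matrix.smul_single, smul_eq_mul, mul_one]

private lemma key_ext {dA dB : ℕ} {U : Matrix (Fin dA) (Fin dA) ℂ} {V : Matrix (Fin dB) (Fin dB) ℂ}
    (L : Matrix (Fin dA) (Fin dA) ℂ →ₗ[ℂ] Matrix (Fin dB) (Fin dB) ℂ)
    (h : ∀ i j : Fin dA, V * L (Uᵀ * Matrix.single i j (1:ℂ))
        = L (Matrix.single i j (1:ℂ) * Uᵀ) * V)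
    (X : Matrix (Fin dA) (Fin dA) ℂ) :
    V * L (Uᵀ * X) = L (X * Uᵀ) * V := by
  have hX : ∀ i j : Fin dA, Matrix.single i j (X i j)
      = X i j • Matrix.single i j (1:ℂ) := fun i j => std_smul' i j (X i j)
  rw [Matrix.matrix_eq_sum_single X]
  simp only [hX, Matrix.mul_sum, Matrix.sum_mul, Matrix.mul_smul, Matrix.smul_mul,
    map_sum, _root_.map_smul]
  exact Finset.sum_congr rfl fun i _ => Finset.sum_congr rfl fun j _ => by rw [h i j]

theorem stmt_3 (G : Type*) [Group G] (dA dB : ℕ)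
    (πA : G →* Matrix.unitaryGroup (Fin dA) ℂ)
    (πB : G →* Matrix.unitaryGroup (Fin dB) ℂ)
    (L : Matrix (Fin dA) (Fin dA) ℂ →ₗ[ℂ] Matrix (Fin dB) (Fin dB) ℂ) :
    (∀ (x : G) (X : Matrix (Fin dA) (Fin dA) ℂ),
        L ((πA x : Matrix (Fin dA) (Fin dA) ℂ).map (starRingEnd ℂ) * X *
              (πA x : Matrix (Fin dA) (Fin dA) ℂ)ᵀ)
          = (πB x : Matrix (Fin dB) (Fin dB) ℂ) * L X * (πB x : Matrix (Fin dB) (Fin dB) ℂ)ᴴ) ↔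
    (∀ x : G,
        ((πA x : Matrix (Fin dA) (Fin dA) ℂ) ⊗ₖ (πB x : Matrix (Fin dB) (Fin dB) ℂ)) *
            ((dA : ℂ)⁻¹ • ∑ i : Fin dA, ∑ j : Fin dA,
              (Matrix.single i j (1 : ℂ)) ⊗ₖ L (Matrix.single i j (1 : ℂ)))
          = ((dA : ℂ)⁻¹ • ∑ i : Fin dA, ∑ j : Fin dA,
              (Matrix.single i j (1 : ℂ)) ⊗ₖ L (Matrix.single i j (1 : ℂ))) *
            ((πA x : Matrix (Fin dA) (Fin dA) ℂ) ⊗ₖ (πB x : Matrix (Fin dB) (Fin dB) ℂ))) := by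
  constructor
  · intro h x
    set U : Matrix (Fin dA) (Fin dA) ℂ := (πA x : Matrix (Fin dA) (Fin dA) ℂ) with hUdef
    set V : Matrix (Fin dB) (Fin dB) ℂ := (πB x : Matrix (Fin dB) (Fin dB) ℂ) with hVdef
    have hU1 : U * Uᴴ = 1 := by
      have := (πA x).2
      rw [Matrix.mem_unitaryGroup_iff] at this
      simpa [Matrix.star_eq_conjTranspose] using this
    have hV2 : Vᴴ * V = 1 := by
      have := (πB x).2
      rw [Matrix.mem_unitaryGroup_iff'] at this
      simpa [Matrix.star_eq_conjTranspose] using this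
    have hmap : U.map (starRingEnd ℂ) = Uᴴᵀ := by ext a b; simp [Matrix.conjTranspose_apply]
    have hconj : U.map (starRingEnd ℂ) * Uᵀ = 1 := by
      rw [hmap, ← Matrix.transpose_mul, ← Matrix.transpose_one]
      rw [hU1]
    rw [Matrix.mul_smul, Matrix.smul_mul]
    congr 1
    rw [left_mul, right_mul]
    refine Finset.sum_congr rfl fun i _ => Finset.sum_congr rfl fun j _ => ?_
    have hx := h x (Uᵀ * Matrix.single i j (1:ℂ))
    rw [show U.map (starRingEnd ℂ) * (Uᵀ * Matrix.single i j (1:ℂ)) * Uᵀ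
        = Matrix.single i j (1:ℂ) * Uᵀ by
      rw [← mul_assoc, hconj, one_mul]] at hx
    rw [hx, mul_assoc, mul_assoc, hV2, mul_one]
  · intro h x X
    set U : Matrix (Fin dA) (Fin dA) ℂ := (πA x : Matrix (Fin dA) (Fin dA) ℂ) with hUdef
    set V : Matrix (Fin dB) (Fin dB) ℂ := (πB x : Matrix (Fin dB) (Fin dB) ℂ) with hVdef
    have hU2 : Uᴴ * U = 1 := by
      have := (πA x).2
      rw [Matrix.mem_unitaryGroup_iff'] at this
      simpa [Matrix.star_eq_conjTranspose] using this
    have hV1 : V * Vᴴ = 1 := by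
      have := (πB x).2
      rw [Matrix.mem_unitaryGroup_iff] at this
      simpa [Matrix.star_eq_conjTranspose] using this
    have hmap : U.map (starRingEnd ℂ) = Uᴴᵀ := by ext a b; simp [Matrix.conjTranspose_apply]
    have hconj2 : Uᵀ * U.map (starRingEnd ℂ) = 1 := by
      rw [hmap, ← Matrix.transpose_mul, ← Matrix.transpose_one]
      rw [hU2]
    rcases Nat.eq_zero_or_pos dA with hdA | hdA
    · subst hdA
      have hX0 : X = 0 := Subsingleton.elim _ _
      rw [hX0]
      rw [show U.map (starRingEnd ℂ) * (0 : Matrix (Fin 0) (Fin 0) ℂ) * Uᵀ = 0 from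
        Subsingleton.elim _ _]
      simp
    · have hc : (dA : ℂ)⁻¹ ≠ 0 := by
        apply inv_ne_zero
        exact_mod_cast hdA.ne'
      have hx := h x
      rw [Matrix.mul_smul, Matrix.smul_mul, left_mul, right_mul] at hx
      have hx2 := smul_right_injective (Matrix (Fin dA × Fin dB) (Fin dA × Fin dB) ℂ) hc hx
      have key : ∀ i j : Fin dA, V * L (Uᵀ * Matrix.single i j (1:ℂ))
          = L (Matrix.single i j (1:ℂ) * Uᵀ) * V :=
        fun i j => extract_blocks hx2 i j
      have keyY := key_ext L key (U.map (starRingEnd ℂ) * X)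
      rw [← mul_assoc, hconj2, one_mul] at keyY
      rw [keyY, mul_assoc, mul_assoc, hV1, mul_one]
end

section
/- Every linear map L : M_d(ℂ) → M_d(ℂ) that is covariant under the signed symmetric group H_d (i.e. L(H X Hᵀ) = H L(X) Hᵀ for all H ∈ H_d) is a linear combination of the four maps ψ₀(X) = (Tr X / d)·Id_d, ψ₁(X) = X, ψ₂(X) = Xᵀ, and ψ₃(X) = diag(X). -/
open Matrix

/-- Entry formula for conjugation by a signed permutation matrix. -/
lemma conj_entry {d : ℕ} (s : Fin d → ℂ) (σ : Equiv.Perm (Fin d))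
    (X : Matrix (Fin d) (Fin d) ℂ) (i j : Fin d) :
    ((Matrix.of fun i j => if i = σ j then s j else 0) * X *
        (Matrix.of fun i j => if i = σ j then s j else 0)ᵀ) i j
      = s (σ.symm i) * X (σ.symm i) (σ.symm j) * s (σ.symm j) := by
  have h1 : ∀ b, (((Matrix.of fun i j => if i = σ j then s j else 0) : Matrix (Fin d) (Fin d) ℂ) * X) i b
      = s (σ.symm i) * X (σ.symm i) b := by
    intro b
    rw [Matrix.mul_apply]
    rw [Finset.sum_eq_single (σ.symm i)]
    · simp
    · intro a _ ha
      have : ¬ (i = σ a) := by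
        intro h; apply ha; rw [h]; simp
      simp [this]
    · simp
  rw [Matrix.mul_apply]
  rw [Finset.sum_eq_single (σ.symm j)]
  · rw [h1]; simp [mul_comm]
  · intro b _ hb
    have : ¬ (j = σ b) := by
      intro h; apply hb; rw [h]; simp
    simp [this]
  · simp

/-- Existence of a permutation sending two given distinct points to two given distinct points. -/
lemma exists_perm_two {d : ℕ} (p q k l : Fin d) (hpq : p ≠ q) (hkl : k ≠ l) :
    ∃ σ : Equiv.Perm (Fin d), σ p = k ∧ σ q = l := by
  set τ₁ := Equiv.swap p k
  set l₀ := τ₁ l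
  have hl₀p : l₀ ≠ p := by
    simp only [l₀, τ₁]
    intro h
    have := (Equiv.swap p k).injective (a₁ := l) (a₂ := k) (by simpa [Equiv.swap_apply_right] using h)
    exact hkl this.symm
  refine ⟨(Equiv.swap q l₀).trans τ₁, ?_, ?_⟩
  · simp only [Equiv.trans_apply]
    rw [Equiv.swap_apply_of_ne_of_ne hpq hl₀p.symm]
    simp [τ₁]
  · simp only [Equiv.trans_apply]
    rw [Equiv.swap_apply_left]
    simp [l₀, τ₁]

theorem stmt_6 (d : ℕ) (hd : 2 ≤ d)
    (L : Matrix (Fin d) (Fin d) ℂ →ₗ[ℂ] Matrix (Fin d) (Fin d) ℂ)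
    (hcov : ∀ (s : Fin d → ℂ) (σ : Equiv.Perm (Fin d)),
      (∀ i, s i = 1 ∨ s i = -1) →
      ∀ X : Matrix (Fin d) (Fin d) ℂ,
        L ((Matrix.of fun i j => if i = σ j then s j else 0) * X *
              (Matrix.of fun i j => if i = σ j then s j else 0)ᵀ)
          = (Matrix.of fun i j => if i = σ j then s j else 0) * L X *
              (Matrix.of fun i j => if i = σ j then s j else 0)ᵀ) :
    ∃ a b c e : ℂ, ∀ X : Matrix (Fin d) (Fin d) ℂ,
      L X = a • ((X.trace / d) • (1 : Matrix (Fin d) (Fin d) ℂ)) + b • X + c • Xᵀ +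
        e • Matrix.diagonal (fun i => X i i) := by
  set E : Fin d → Fin d → Matrix (Fin d) (Fin d) ℂ :=
    fun k l => Matrix.single k l 1 with hE
  set M : Fin d → Fin d → Matrix (Fin d) (Fin d) ℂ := fun k l => L (E k l) with hM
  -- Sign covariance fact
  have factS : ∀ (s : Fin d → ℂ), (∀ i, s i = 1 ∨ s i = -1) →
      ∀ k l i j, s k * s l * M k l i j = s i * s j * M k l i j := by
    intro s hs k l i j
    have h := congrFun (congrFun (hcov s 1 hs (E k l)) i) j
    have hL : ((Matrix.of fun i j => if i = (1 : Equiv.Perm (Fin d)) j then s j else 0) * E k l *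
        (Matrix.of fun i j => if i = (1 : Equiv.Perm (Fin d)) j then s j else 0)ᵀ)
        = (s k * s l) • E k l := by
      ext a b
      rw [conj_entry]
      simp only [Equiv.Perm.one_symm, Equiv.Perm.coe_one, id_eq, Matrix.smul_apply, smul_eq_mul]
      by_cases hab : k = a ∧ l = b
      · obtain ⟨rfl, rfl⟩ := hab
        simp [hE]
      · rw [hE]; simp only [Matrix.single_apply_of_ne _ _ _ _ _ hab,
          mul_zero, zero_mul]
    rw [hL, L.map_smul] at h
    rw [conj_entry] at h
    simp only [Matrix.smul_apply, smul_eq_mul, Equiv.Perm.one_symm, Equiv.Perm.coe_one, id_eq] at h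
    rw [hM]
    rw [h]; ring
  -- Permutation covariance fact
  have factP : ∀ (σ : Equiv.Perm (Fin d)) k l i j,
      M (σ k) (σ l) (σ i) (σ j) = M k l i j := by
    intro σ k l i j
    have h := congrFun (congrFun (hcov 1 σ (fun _ => Or.inl rfl) (E k l)) (σ i)) (σ j)
    have hL : ((Matrix.of fun i j => if i = σ j then (1 : Fin d → ℂ) j else 0) * E k l *
        (Matrix.of fun i j => if i = σ j then (1 : Fin d → ℂ) j else 0)ᵀ)
        = E (σ k) (σ l) := by
      ext a b
      rw [conj_entry]
      simp only [Pi.one_apply, one_mul, mul_one, hE]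
      by_cases hab : σ k = a ∧ σ l = b
      · obtain ⟨rfl, rfl⟩ := hab
        simp
      · have hab' : ¬ (k = σ.symm a ∧ l = σ.symm b) := by
          rintro ⟨rfl, rfl⟩
          exact hab ⟨by simp, by simp⟩
        rw [Matrix.single_apply_of_ne _ _ _ _ _ hab',
            Matrix.single_apply_of_ne _ _ _ _ _ hab]
    rw [hL] at h
    rw [conj_entry] at h
    simpa [hM] using h
  -- sign vector flipping one coordinate
  have signfact : ∀ (t : Fin d), ∀ i : Fin d,
      ((fun x => if x = t then (-1:ℂ) else 1) i = 1 ∨ (fun x => if x = t then (-1:ℂ) else 1) i = -1) := by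
    intro t i
    by_cases h : i = t <;> simp [h]
  -- (a) diagonal basis matrices have diagonal image
  have facta : ∀ k i j, i ≠ j → M k k i j = 0 := by
    intro k i j hij
    have h := factS (fun x => if x = i then (-1:ℂ) else 1) (signfact i) k k i j
    have h1 : (if k = i then (-1:ℂ) else 1) * (if k = i then (-1:ℂ) else 1) = 1 := by
      by_cases hk : k = i <;> simp [hk]
    have h2 : (if i = i then (-1:ℂ) else 1) * (if j = i then (-1:ℂ) else 1) = -1 := by
      simp [hij.symm]
    beta_reduce at h
    rw [h1, h2, one_mul, neg_one_mul] at h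
    linear_combination h / 2
  -- (b) off-diagonal basis matrices: support condition
  have factb : ∀ k l i j, k ≠ l → ¬ ((i = k ∧ j = l) ∨ (i = l ∧ j = k)) → M k l i j = 0 := by
    intro k l i j hkl hsup
    -- find t such that exactly one of the products flips
    have key : ∃ t : Fin d,
        ((if k = t then (-1:ℂ) else 1) * (if l = t then (-1:ℂ) else 1)) *
        ((if i = t then (-1:ℂ) else 1) * (if j = t then (-1:ℂ) else 1)) = -1 := by
      by_cases hij : i = j
      · refine ⟨k, ?_⟩
        subst hij
        have : l ≠ k := hkl.symm
        by_cases hik : i = k <;> simp [this, hik]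
      · by_cases hik : i = k
        · -- then j ≠ l (else support) and j ≠ k? use t := j
          subst hik
          have hjl : j ≠ l := fun h => hsup (Or.inl ⟨rfl, h⟩)
          refine ⟨j, ?_⟩
          have h1 : i ≠ j := hij
          simp [hij, (Ne.symm hij), (Ne.symm hjl)]
        · by_cases hil : i = l
          · subst hil
            have hjk : j ≠ k := fun h => hsup (Or.inr ⟨rfl, h⟩)
            refine ⟨j, ?_⟩
            simp [hij, (Ne.symm hij), (Ne.symm hjk)]
          · -- i ∉ {k,l}: t := i
            refine ⟨i, ?_⟩
            simp [hij, (Ne.symm hik), (Ne.symm hil), (Ne.symm hij)]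
    obtain ⟨t, ht⟩ := key
    have h := factS (fun x => if x = t then (-1:ℂ) else 1) (signfact t) k l i j
    beta_reduce at h
    -- from h : (sk*sl)*M = (si*sj)*M and ht : (sk*sl)*(si*sj) = -1 derive M = 0
    set u : ℂ := (if k = t then (-1:ℂ) else 1) * (if l = t then (-1:ℂ) else 1) with hu
    set v : ℂ := (if i = t then (-1:ℂ) else 1) * (if j = t then (-1:ℂ) else 1) with hv
    have hu2 : u = 1 ∨ u = -1 := by
      rw [hu]; by_cases h1 : k = t <;> by_cases h2 : l = t <;> simp [h1, h2]
    rcases hu2 with hP | hP <;> rw [hP] at ht h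
    · rw [one_mul] at ht
      rw [ht] at h
      linear_combination h / 2
    · have hv1 : v = 1 := by
        rcases (by rw [hv]; by_cases h1 : i = t <;> by_cases h2 : j = t <;> simp [h1, h2] :
          v = 1 ∨ v = -1) with h' | h'
        · exact h'
        · rw [h'] at ht; norm_num at ht
      rw [hv1] at h
      linear_combination (-h) / 2
  -- constants
  have h0 : (0:ℕ) < d := by omega
  have h1 : (1:ℕ) < d := by omega
  set i0 : Fin d := ⟨0, h0⟩ with hi0
  set i1 : Fin d := ⟨1, h1⟩ with hi1
  have h01 : i0 ≠ i1 := by simp [hi0, hi1, Fin.ext_iff]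
  set b : ℂ := M i0 i1 i0 i1 with hbdef
  set c : ℂ := M i0 i1 i1 i0 with hcdef
  set α : ℂ := M i0 i0 i0 i0 with hαdef
  set β : ℂ := M i0 i0 i1 i1 with hβdef
  have hb : ∀ k l, k ≠ l → M k l k l = b := by
    intro k l hkl
    obtain ⟨σ, hσ0, hσ1⟩ := exists_perm_two i0 i1 k l h01 hkl
    have := factP σ i0 i1 i0 i1
    rw [hσ0, hσ1] at this
    exact this.trans hbdef.symm
  have hc : ∀ k l, k ≠ l → M k l l k = c := by
    intro k l hkl
    obtain ⟨σ, hσ0, hσ1⟩ := exists_perm_two i0 i1 k l h01 hkl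
    have := factP σ i0 i1 i1 i0
    rw [hσ0, hσ1] at this
    exact this.trans hcdef.symm
  have hα : ∀ k, M k k k k = α := by
    intro k
    have := factP (Equiv.swap i0 k) i0 i0 i0 i0
    rw [Equiv.swap_apply_left] at this
    exact this.trans hαdef.symm
  have hβ : ∀ k i, i ≠ k → M k k i i = β := by
    intro k i hik
    obtain ⟨σ, hσ0, hσ1⟩ := exists_perm_two i0 i1 k i h01 (Ne.symm hik)
    have := factP σ i0 i0 i1 i1
    rw [hσ0, hσ1] at this
    exact this.trans hβdef.symm
  -- final assembly
  have hdC : (d:ℂ) ≠ 0 := Nat.cast_ne_zero.mpr (by omega)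
  set e : ℂ := α - β - b - c with hedef
  set F : Matrix (Fin d) (Fin d) ℂ → Matrix (Fin d) (Fin d) ℂ := fun X =>
    ((d:ℂ) * β) • ((X.trace / d) • (1 : Matrix (Fin d) (Fin d) ℂ)) + b • X + c • Xᵀ +
      e • Matrix.diagonal (fun i => X i i) with hF
  have Fadd : ∀ p q, F (p + q) = F p + F q := by
    intro p q
    ext i j
    simp only [hF, Matrix.add_apply, Matrix.smul_apply, smul_eq_mul, Matrix.transpose_apply,
      Matrix.diagonal_apply, Matrix.one_apply, trace_add, add_div]
    split_ifs <;> ring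
  have Fsmul : ∀ (x : ℂ) (X), F (x • X) = x • F X := by
    intro x X
    ext i j
    simp only [hF, Matrix.add_apply, Matrix.smul_apply, smul_eq_mul, Matrix.transpose_apply,
      Matrix.diagonal_apply, Matrix.one_apply, trace_smul, smul_eq_mul, mul_div_assoc]
    split_ifs <;> ring
  have base : ∀ k l, L (E k l) = F (E k l) := by
    intro k l
    by_cases hkl : k = l
    · subst hkl
      ext i j
      have htr : (E k k).trace = 1 := by rw [hE]; exact Matrix.trace_single_eq_same k 1
      simp only [hF, Matrix.add_apply, Matrix.smul_apply, smul_eq_mul, Matrix.transpose_apply,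
        Matrix.diagonal_apply, Matrix.one_apply, htr]
      by_cases hij : i = j
      · subst hij
        by_cases hik : i = k
        · subst hik
          rw [show L (E i i) i i = α from hα i]
          simp [hE, hedef]
          field_simp
          ring
        · rw [show L (E k k) i i = β from hβ k i hik]
          have hz : E k k i i = 0 := by
            rw [hE]; exact Matrix.single_apply_of_ne _ _ _ _ _ (by tauto)
          simp [hz]
          field_simp
      · rw [show L (E k k) i j = 0 from facta k i j hij]
        have hz : E k k i j = 0 := by
          rw [hE]
          refine Matrix.single_apply_of_ne _ _ _ _ _ ?_
          rintro ⟨rfl, rfl⟩; exact hij rfl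
        have hz' : E k k j i = 0 := by
          rw [hE]
          refine Matrix.single_apply_of_ne _ _ _ _ _ ?_
          rintro ⟨rfl, rfl⟩; exact hij rfl
        simp [hz, hz', hij]
    · ext i j
      have htr : (E k l).trace = 0 := by
        rw [hE]; exact Matrix.trace_single_eq_of_ne k l 1 hkl
      have hdiag : ∀ i : Fin d, E k l i i = 0 := by
        intro i
        rw [hE]
        refine Matrix.single_apply_of_ne _ _ _ _ _ ?_
        rintro ⟨rfl, rfl⟩; exact hkl rfl
      simp only [hF, Matrix.add_apply, Matrix.smul_apply, smul_eq_mul, Matrix.transpose_apply,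
        Matrix.diagonal_apply, Matrix.one_apply, htr, hdiag, zero_div, mul_zero, zero_mul]
      by_cases h1 : k = i ∧ l = j
      · obtain ⟨rfl, rfl⟩ := h1
        rw [show L (E k l) k l = b from hb k l hkl]
        have hz : E k l l k = 0 := by
          rw [hE]
          refine Matrix.single_apply_of_ne _ _ _ _ _ ?_
          rintro ⟨rfl, -⟩; exact hkl rfl
        simp [hz, hE, hkl]
      · by_cases h2 : l = i ∧ k = j
        · obtain ⟨rfl, rfl⟩ := h2
          rw [show L (E k l) l k = c from hc k l hkl]
          have hz : E k l l k = 0 := by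
            rw [hE]
            refine Matrix.single_apply_of_ne _ _ _ _ _ ?_
            rintro ⟨rfl, -⟩; exact hkl rfl
          simp [hz, hE, hkl, Ne.symm hkl]
        · rw [show L (E k l) i j = 0 from factb k l i j hkl (by
            rintro (⟨rfl, rfl⟩ | ⟨rfl, rfl⟩)
            · exact h1 ⟨rfl, rfl⟩
            · exact h2 ⟨rfl, rfl⟩)]
          have hz : E k l i j = 0 := by
            rw [hE]
            refine Matrix.single_apply_of_ne _ _ _ _ _ ?_
            rintro ⟨rfl, rfl⟩; exact h1 ⟨rfl, rfl⟩
          have hz' : E k l j i = 0 := by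
            rw [hE]
            refine Matrix.single_apply_of_ne _ _ _ _ _ ?_
            rintro ⟨rfl, rfl⟩; exact h2 ⟨rfl, rfl⟩
          simp [hz, hz']
  have key : ∀ X, L X = F X := by
    intro X
    induction X using Matrix.induction_on' with
    | h_zero =>
      rw [map_zero]
      ext i j
      simp [hF]
    | h_add p q hp hq => rw [map_add, hp, hq, Fadd]
    | h_std_basis k l x =>
      have hx : Matrix.single k l x = x • E k l := by
        rw [hE, Matrix.smul_single, smul_eq_mul, mul_one]
      rw [hx, L.map_smul, Fsmul, base]
  exact ⟨(d:ℂ) * β, b, c, e, fun X => key X⟩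
end

section
/- The quantum channel ψ_{a,b,c}(X) = a(Tr X/d)Id_d + bX + cXᵀ + (1−a−b−c)diag(X) on M_d(ℂ) is completely positive and trace preserving if and only if 0 ≤ a ≤ d/(d−1), a/d − 1/(d−1) ≤ b ≤ 1 − (d−1)a/d, and −a/d ≤ c ≤ a/d. -/
open Matrix Kronecker ComplexOrder

/-- The map `ψ_{a,b,c}(X) = a (Tr X / d) Id + b X + c Xᵀ + (1-a-b-c) diag(X)`. -/
noncomputable def psi (d : ℕ) (a b c : ℂ) (X : Matrix (Fin d) (Fin d) ℂ) :
    Matrix (Fin d) (Fin d) ℂ :=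
  (a * (X.trace / d)) • (1 : Matrix (Fin d) (Fin d) ℂ) + b • X + c • Xᵀ +
    (1 - a - b - c) • Matrix.diagonal (fun i => X i i)

/-- The (unnormalized) Choi matrix of a map on `M_d(ℂ)`. -/
noncomputable def choi (d : ℕ)
    (L : Matrix (Fin d) (Fin d) ℂ → Matrix (Fin d) (Fin d) ℂ) :
    Matrix (Fin d × Fin d) (Fin d × Fin d) ℂ :=
  ∑ i : Fin d, ∑ j : Fin d,
    (Matrix.single i j (1 : ℂ)) ⊗ₖ L (Matrix.single i j (1 : ℂ))

set_option maxHeartbeats 1000000 in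
lemma psi_std (d : ℕ) (a b c : ℂ) (i j k l : Fin d) :
    psi d a b c (single i j 1) k l =
      (if i = j ∧ k = l then a / d else 0) + (if i = k ∧ j = l then b else 0) +
      (if i = l ∧ j = k then c else 0) +
      (if i = j ∧ i = k ∧ i = l then 1 - a - b - c else 0) := by
  have htr : (single i j (1:ℂ)).trace = if i = j then 1 else 0 := by
    simp only [Matrix.trace, Matrix.diag, Matrix.single, Matrix.of_apply, ite_and]
    rw [Finset.sum_ite_eq]
    simp [eq_comm]
  rw [psi, htr]
  simp only [Matrix.add_apply, Matrix.smul_apply, Matrix.one_apply, Matrix.transpose_apply,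
    Matrix.diagonal_apply, Matrix.single, Matrix.of_apply, smul_eq_mul]
  clear htr
  split_ifs
  all_goals try (exfalso; (try casesm* _ ∧ _); subst_vars; tauto)
  all_goals ring

lemma choi_apply (d : ℕ) (L : Matrix (Fin d) (Fin d) ℂ → Matrix (Fin d) (Fin d) ℂ)
    (i k j l : Fin d) : choi d L (i,k) (j,l) = L (single i j 1) k l := by
  simp [choi, Matrix.sum_apply, Matrix.single, Matrix.kroneckerMap_apply, ite_and]

lemma choi_psi (d : ℕ) (a b c : ℂ) (p q : Fin d × Fin d) :
    choi d (psi d a b c) p q =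
      (if q = p then a / d else 0) + (if p.1 = p.2 ∧ q.1 = q.2 then b else 0) +
      (if q = (p.2, p.1) then c else 0) + (if p.1 = p.2 ∧ q = p then 1 - a - b - c else 0) := by
  obtain ⟨i, k⟩ := p; obtain ⟨j, l⟩ := q
  have e1 : ((j,l) = (i,k)) ↔ (i = j ∧ k = l) := by
    rw [Prod.ext_iff]
    exact ⟨fun ⟨h1,h2⟩ => ⟨h1.symm, h2.symm⟩, fun ⟨h1,h2⟩ => ⟨h1.symm, h2.symm⟩⟩
  have e3 : ((j,l) = (k,i)) ↔ (i = l ∧ j = k) := by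
    rw [Prod.ext_iff]
    exact ⟨fun ⟨h1,h2⟩ => ⟨h2.symm, h1⟩, fun ⟨h1,h2⟩ => ⟨h2, h1.symm⟩⟩
  have e4 : (i = k ∧ i = j ∧ k = l) ↔ (i = j ∧ i = k ∧ i = l) :=
    ⟨fun ⟨hik, hij, hkl⟩ => ⟨hij, hik, hik.trans hkl⟩,
     fun ⟨hij, hik, hil⟩ => ⟨hik, hij, hik.symm.trans hil⟩⟩
  rw [choi_apply, psi_std]
  simp only [e1, e3]
  simp only [e4]

lemma qform (d : ℕ) (a b c : ℂ) (x : Fin d × Fin d → ℂ) :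
    star x ⬝ᵥ (choi d (psi d a b c)) *ᵥ x =
      (a / d) * ∑ p : Fin d × Fin d, star (x p) * x p
      + b * ((∑ i : Fin d, star (x (i, i))) * ∑ i : Fin d, x (i, i))
      + c * ∑ p : Fin d × Fin d, star (x p) * x (p.2, p.1)
      + (1 - a - b - c) * ∑ i : Fin d, star (x (i, i)) * x (i, i) := by
  have step1 : star x ⬝ᵥ (choi d (psi d a b c)) *ᵥ x =
      ∑ p : Fin d × Fin d, ∑ q : Fin d × Fin d,
        star (x p) * choi d (psi d a b c) p q * x q := by
    simp [dotProduct, mulVec, Finset.mul_sum, mul_assoc]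
  rw [step1]
  simp only [choi_psi]
  simp only [mul_add, add_mul, mul_ite, ite_mul, mul_zero, zero_mul,
    Finset.sum_add_distrib]
  congr 1
  · congr 1
    · congr 1
      · simp only [Finset.sum_ite_eq', Finset.mem_univ, if_true]
        rw [Finset.mul_sum]
        exact Finset.sum_congr rfl fun p _ => by ring
      · have hsplit : ∀ (p q : Fin d × Fin d),
            (if p.1 = p.2 ∧ q.1 = q.2 then star (x p) * b * x q else 0)
              = (if p.1 = p.2 then star (x p) * b else 0) * (if q.1 = q.2 then x q else 0) := by
          intro p q
          by_cases h1 : p.1 = p.2 <;> by_cases h2 : q.1 = q.2 <;> simp [h1, h2, mul_assoc]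
        simp only [hsplit]
        rw [← Finset.sum_mul_sum]
        have h1 : ∑ p : Fin d × Fin d, (if p.1 = p.2 then star (x p) * b else 0)
            = b * ∑ i : Fin d, star (x (i, i)) := by
          rw [Fintype.sum_prod_type]
          simp only [Finset.sum_ite_eq, Finset.mem_univ, if_true]
          rw [Finset.mul_sum]
          exact Finset.sum_congr rfl fun i _ => by ring
        have h2 : ∑ q : Fin d × Fin d, (if q.1 = q.2 then x q else 0)
            = ∑ i : Fin d, x (i, i) := by
          rw [Fintype.sum_prod_type]
          simp only [Finset.sum_ite_eq, Finset.mem_univ, if_true]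
        rw [h1, h2]
        ring
    · simp only [Finset.sum_ite_eq', Finset.mem_univ, if_true]
      rw [Finset.mul_sum]
      exact Finset.sum_congr rfl fun p _ => by ring
  · have hinner : ∀ p : Fin d × Fin d,
        (∑ q : Fin d × Fin d, if p.1 = p.2 ∧ q = p then star (x p) * (1 - a - b - c) * x q else 0)
          = if p.1 = p.2 then star (x p) * (1 - a - b - c) * x p else 0 := by
      intro p
      by_cases h : p.1 = p.2
      · simp [h, Finset.sum_ite_eq', Finset.mem_univ]
      · simp [h]
    simp only [hinner]
    rw [Fintype.sum_prod_type]
    simp only [Finset.sum_ite_eq, Finset.mem_univ, if_true]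
    rw [Finset.mul_sum]
    exact Finset.sum_congr rfl fun i _ => by ring

lemma herm (d : ℕ) (a b c : ℝ) : (choi d (psi d (a:ℂ) (b:ℂ) (c:ℂ))).IsHermitian := by
  ext p q
  simp only [conjTranspose_apply, choi_psi]
  obtain ⟨i,k⟩ := p; obtain ⟨j,l⟩ := q
  simp only [Prod.mk.injEq, star_add, apply_ite (star : ℂ → ℂ), star_zero, star_sub, star_one,
    star_div₀, Complex.star_def, Complex.conj_ofReal, map_natCast, _root_.map_one]
  have e1 : (i = j ∧ k = l) ↔ (j = i ∧ l = k) :=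
    ⟨fun ⟨h1,h2⟩ => ⟨h1.symm, h2.symm⟩, fun ⟨h1,h2⟩ => ⟨h1.symm, h2.symm⟩⟩
  have e2 : (j = l ∧ i = k) ↔ (i = k ∧ j = l) := and_comm
  have e3 : (i = l ∧ k = j) ↔ (j = k ∧ l = i) :=
    ⟨fun ⟨h1,h2⟩ => ⟨h2.symm, h1.symm⟩, fun ⟨h1,h2⟩ => ⟨h2.symm, h1.symm⟩⟩
  have e4 : (j = l ∧ i = j ∧ k = l) ↔ (i = k ∧ j = i ∧ l = k) :=
    ⟨fun ⟨hjl, hij, hkl⟩ => ⟨hij.trans (hjl.trans hkl.symm), hij.symm, hkl.symm⟩,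
     fun ⟨hik, hji, hlk⟩ => ⟨(hji.trans hik).trans hlk.symm, hji.symm, hlk.symm⟩⟩
  have e5 : (j = l ∧ j = i ∧ l = k) ↔ (i = k ∧ j = i ∧ l = k) :=
    ⟨fun ⟨hjl, hji, hlk⟩ => ⟨hji.symm.trans (hjl.trans hlk), hji, hlk⟩,
     fun ⟨hik, hji, hlk⟩ => ⟨hji.trans (hik.trans hlk.symm), hji, hlk⟩⟩
  simp only [e1, e2, e3, e4, e5]

lemma sum_two_support {α : Type*} [Fintype α] [DecidableEq α] {M : Type*} [AddCommMonoid M]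
    (p₁ p₂ : α) (hne : p₁ ≠ p₂) (f : α → M)
    (h : ∀ q, q ≠ p₁ → q ≠ p₂ → f q = 0) :
    ∑ q, f q = f p₁ + f p₂ := by
  rw [← Finset.sum_subset (Finset.subset_univ ({p₁, p₂} : Finset α))]
  · rw [Finset.sum_pair hne]
  · intro q _ hq
    simp only [Finset.mem_insert, Finset.mem_singleton, not_or] at hq
    exact h q hq.1 hq.2

lemma psi_trace (d : ℕ) (hd : 0 < d) (a b c : ℂ) (X : Matrix (Fin d) (Fin d) ℂ) :
    (psi d a b c X).trace = X.trace := by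
  have hdne : (d:ℂ) ≠ 0 := Nat.cast_ne_zero.mpr hd.ne'
  have htd : (Matrix.diagonal (fun i => X i i)).trace = X.trace := by
    simp [Matrix.trace, Matrix.diag]
  simp only [psi, Matrix.trace_add, Matrix.trace_smul, Matrix.trace_one, Matrix.trace_transpose,
    htd, smul_eq_mul, Fintype.card_fin]
  field_simp
  ring

lemma re_conj_mul_le (u v : ℂ) :
    |((starRingEnd ℂ) u * v).re| ≤ (Complex.normSq u + Complex.normSq v) / 2 := by
  rw [abs_le]
  constructor <;>
  · simp only [Complex.mul_re, Complex.conj_re, Complex.conj_im, Complex.normSq_apply]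
    nlinarith [sq_nonneg (u.re - v.re), sq_nonneg (u.im - v.im),
      sq_nonneg (u.re + v.re), sq_nonneg (u.im + v.im)]

set_option maxHeartbeats 1000000 in
lemma psd_of (d : ℕ) (hd : 2 ≤ d) (a b c : ℝ)
    (hb1 : a / d - 1 / ((d:ℝ) - 1) ≤ b) (hb2 : b ≤ 1 - ((d:ℝ) - 1) * a / d)
    (hc1 : -(a / d) ≤ c) (hc2 : c ≤ a / d) :
    (choi d (psi d (a:ℂ) (b:ℂ) (c:ℂ))).PosSemidef := by
  have dpos : (0:ℝ) < d := by exact_mod_cast Nat.lt_of_lt_of_le Nat.zero_lt_two hd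
  have hdR : (2:ℝ) ≤ d := by exact_mod_cast hd
  have hdne : (d:ℝ) ≠ 0 := dpos.ne'
  refine Matrix.PosSemidef.of_dotProduct_mulVec_nonneg (herm d a b c) fun x => ?_
  rw [qform]
  set S2 : ℝ := ∑ i : Fin d, Complex.normSq (x (i,i)) with hS2def
  set Soff : ℝ := ∑ p : Fin d × Fin d, (if p.1 = p.2 then 0 else Complex.normSq (x p)) with hSoffdef
  set T : ℂ := ∑ i : Fin d, x (i,i) with hTdef
  set Roff : ℂ := ∑ p : Fin d × Fin d,
    (if p.1 = p.2 then 0 else (starRingEnd ℂ) (x p) * x (p.2,p.1)) with hRoffdef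
  have point : ∀ z : ℂ, star z * z = ((Complex.normSq z : ℝ) : ℂ) := fun z => by
    rw [Complex.star_def, mul_comm, Complex.mul_conj]
  -- h4 : diagonal square sum
  have h4 : ∑ i : Fin d, star (x (i,i)) * x (i,i) = ((S2 : ℝ) : ℂ) := by
    rw [hS2def]
    push_cast
    exact Finset.sum_congr rfl fun i _ => point _
  -- h1 : full square sum
  have h1 : ∑ p : Fin d × Fin d, star (x p) * x p = ((S2 + Soff : ℝ) : ℂ) := by
    have hsplit : ∑ p : Fin d × Fin d, star (x p) * x p
        = (∑ p : Fin d × Fin d, if p.1 = p.2 then star (x p) * x p else 0)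
          + (∑ p : Fin d × Fin d, if p.1 = p.2 then 0 else star (x p) * x p) := by
      rw [← Finset.sum_add_distrib]
      exact Finset.sum_congr rfl fun p _ => by split_ifs <;> ring
    rw [hsplit]
    have hdiag : ∑ p : Fin d × Fin d, (if p.1 = p.2 then star (x p) * x p else 0)
        = ((S2 : ℝ) : ℂ) := by
      rw [Fintype.sum_prod_type]
      simp only [Finset.sum_ite_eq, Finset.mem_univ, if_true]
      rw [hS2def]; push_cast
      exact Finset.sum_congr rfl fun i _ => point _
    have hoff : ∑ p : Fin d × Fin d, (if p.1 = p.2 then 0 else star (x p) * x p)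
        = ((Soff : ℝ) : ℂ) := by
      rw [hSoffdef]; push_cast
      refine Finset.sum_congr rfl fun p _ => ?_
      have point' : (starRingEnd ℂ) (x p) * x p = ((Complex.normSq (x p) : ℝ) : ℂ) := point (x p)
      split_ifs <;> simp [point']
    rw [hdiag, hoff]; push_cast; ring
  -- h2 : the b-term
  have h2 : (∑ i : Fin d, star (x (i,i))) * (∑ i : Fin d, x (i,i))
      = ((Complex.normSq T : ℝ) : ℂ) := by
    have : ∑ i : Fin d, star (x (i,i)) = (starRingEnd ℂ) T := by
      rw [hTdef, map_sum]
      exact Finset.sum_congr rfl fun i _ => rfl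
    rw [this, mul_comm, Complex.mul_conj]
  -- h3 : the c-term
  have h3 : ∑ p : Fin d × Fin d, star (x p) * x (p.2, p.1) = ((S2 : ℝ) : ℂ) + Roff := by
    have hsplit : ∑ p : Fin d × Fin d, star (x p) * x (p.2, p.1)
        = (∑ p : Fin d × Fin d, if p.1 = p.2 then star (x p) * x (p.2,p.1) else 0)
          + (∑ p : Fin d × Fin d, if p.1 = p.2 then 0 else star (x p) * x (p.2,p.1)) := by
      rw [← Finset.sum_add_distrib]
      exact Finset.sum_congr rfl fun p _ => by split_ifs <;> ring
    rw [hsplit]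
    have hdiag : ∑ p : Fin d × Fin d, (if p.1 = p.2 then star (x p) * x (p.2,p.1) else 0)
        = ((S2 : ℝ) : ℂ) := by
      rw [Fintype.sum_prod_type]
      simp only [Finset.sum_ite_eq, Finset.mem_univ, if_true]
      rw [hS2def]; push_cast
      exact Finset.sum_congr rfl fun i _ => point _
    rw [hdiag, hRoffdef]
    rfl
  -- Roff is real
  have hRoffreal : (starRingEnd ℂ) Roff = Roff := by
    rw [hRoffdef, map_sum]
    have hsw : ∀ p : Fin d × Fin d, Prod.swap p = (p.2, p.1) := fun p => rfl
    have lhs_eq : ∀ p : Fin d × Fin d,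
        (starRingEnd ℂ) (if p.1 = p.2 then 0 else (starRingEnd ℂ) (x p) * x (p.2,p.1))
          = (if p.1 = p.2 then 0 else (starRingEnd ℂ) (x (p.2,p.1)) * x p) := by
      intro p; split_ifs <;> simp [mul_comm]
    simp only [lhs_eq]
    rw [← Equiv.sum_comp (Equiv.prodComm (Fin d) (Fin d))]
    refine Finset.sum_congr rfl fun p _ => ?_
    rcases eq_or_ne p.1 p.2 with h | h
    · simp [Equiv.prodComm, h]
    · simp only [Equiv.prodComm_apply, hsw, Prod.fst, Prod.snd]
      rcases p with ⟨u, v⟩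
      simp only []
      rw [if_neg (Ne.symm h), if_neg h, mul_comm]
  have hRoffre : Roff = ((Roff.re : ℝ) : ℂ) := (Complex.conj_eq_iff_re.mp hRoffreal).symm
  set r : ℝ := Roff.re with hrdef
  set nT : ℝ := Complex.normSq T with hnTdef
  -- rewrite everything as a real number
  rw [h1, h2, h3, h4, hRoffre]
  have hcast : ((a:ℂ)/(d:ℂ)) * ((S2 + Soff : ℝ) : ℂ) + (b:ℂ) * ((nT : ℝ) : ℂ)
      + (c:ℂ) * (((S2 : ℝ) : ℂ) + ((r : ℝ) : ℂ))
      + (1 - (a:ℂ) - (b:ℂ) - (c:ℂ)) * ((S2 : ℝ) : ℂ)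
      = (((a/d * (S2 + Soff) + b * nT + c * (S2 + r) + (1 - a - b - c) * S2 : ℝ)) : ℂ) := by
    push_cast
    ring
  rw [hcast]
  rw [Complex.zero_le_real]
  -- now a real inequality
  have f1 : 0 ≤ S2 := Finset.sum_nonneg fun i _ => Complex.normSq_nonneg _
  have f2 : 0 ≤ Soff := Finset.sum_nonneg fun p _ => by
    split_ifs <;> simp [Complex.normSq_nonneg]
  have f3 : 0 ≤ nT := Complex.normSq_nonneg _
  -- Cauchy–Schwarz : nT ≤ d * S2
  have f4 : nT ≤ d * S2 := by
    have habs : ‖T‖ ≤ ∑ i : Fin d, ‖x (i,i)‖ := by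
      rw [hTdef]
      simpa using norm_sum_le (Finset.univ : Finset (Fin d)) (fun i => x (i,i))
    have hcs : (∑ i : Fin d, ‖x (i,i)‖)^2
        ≤ (Finset.univ.card : ℝ) * ∑ i : Fin d, (‖x (i,i)‖)^2 :=
      sq_sum_le_card_mul_sum_sq
    have hcard : ((Finset.univ : Finset (Fin d)).card : ℝ) = d := by simp
    have h1' : nT = (‖T‖)^2 := by rw [hnTdef, Complex.sq_norm]
    have h2' : ∑ i : Fin d, (‖x (i,i)‖)^2 = S2 := by
      rw [hS2def]
      exact Finset.sum_congr rfl fun i _ => Complex.sq_norm _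
    rw [h1', ← h2', ← hcard]
    calc (‖T‖)^2 ≤ (∑ i : Fin d, ‖x (i,i)‖)^2 := by
          apply sq_le_sq' <;> nlinarith [norm_nonneg T,
            Finset.sum_nonneg (fun i (_ : i ∈ Finset.univ) => norm_nonneg (x (i,i)))]
      _ ≤ _ := hcs
  -- |r| ≤ Soff
  have hswap : ∑ p : Fin d × Fin d, (if p.1 = p.2 then 0 else Complex.normSq (x (p.2,p.1)))
      = Soff := by
    rw [hSoffdef, ← Equiv.sum_comp (Equiv.prodComm (Fin d) (Fin d))]
    refine Finset.sum_congr rfl fun p _ => ?_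
    rcases eq_or_ne p.1 p.2 with h | h
    · simp [Equiv.prodComm, h]
    · simp [Equiv.prodComm, h, Ne.symm h]
  have f5 : |r| ≤ Soff := by
    have hre : r = ∑ p : Fin d × Fin d,
        (if p.1 = p.2 then 0 else ((starRingEnd ℂ) (x p) * x (p.2,p.1)).re) := by
      rw [hrdef, hRoffdef, Complex.re_sum]
      exact Finset.sum_congr rfl fun p _ => by split_ifs <;> simp
    have hhalf : ∑ p : Fin d × Fin d,
        (if p.1 = p.2 then 0 else (Complex.normSq (x p) + Complex.normSq (x (p.2,p.1))) / 2)
          = Soff := by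
      have : ∀ p : Fin d × Fin d,
          (if p.1 = p.2 then 0 else (Complex.normSq (x p) + Complex.normSq (x (p.2,p.1))) / 2)
            = ((if p.1 = p.2 then 0 else Complex.normSq (x p))
              + (if p.1 = p.2 then 0 else Complex.normSq (x (p.2,p.1)))) / 2 := by
        intro p; split_ifs <;> ring
      simp only [this]
      rw [← Finset.sum_div, Finset.sum_add_distrib, hswap, ← hSoffdef]
      ring
    rw [abs_le]
    constructor
    · rw [← neg_le, hre, ← Finset.sum_neg_distrib, ← hhalf]
      refine Finset.sum_le_sum fun p _ => ?_
      split_ifs with h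
      · simp
      · have := re_conj_mul_le (x p) (x (p.2,p.1))
        rw [abs_le] at this
        linarith [this.1]
    · rw [hre, ← hhalf]
      refine Finset.sum_le_sum fun p _ => ?_
      split_ifs with h
      · simp
      · have := re_conj_mul_le (x p) (x (p.2,p.1))
        rw [abs_le] at this
        linarith [this.2]
  -- arithmetic
  rw [abs_le] at f5
  have hda : ((d:ℝ)-1) * a / d = a - a / d := by field_simp
  have halpha : 0 ≤ a/d + 1 - a - b := by linarith
  have part1 : 0 ≤ a/d * Soff + c * r := by
    rcases le_or_gt 0 c with h | h
    · nlinarith [mul_le_mul_of_nonneg_left f5.1 h, mul_nonneg (sub_nonneg.mpr hc2) f2]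
    · nlinarith [mul_le_mul_of_nonneg_left f5.2 (neg_nonneg.mpr h.le),
        mul_nonneg (by linarith : (0:ℝ) ≤ a/d + c) f2]
  have part2 : 0 ≤ (a/d + 1 - a - b) * S2 + b * nT := by
    rcases le_or_gt 0 b with h | h
    · have := mul_nonneg halpha f1
      have := mul_nonneg h f3
      linarith
    · have h1d : (0:ℝ) < (d:ℝ) - 1 := by linarith
      have hbeta : 0 ≤ a/d + 1 - a + ((d:ℝ)-1) * b := by
        have hmul := mul_le_mul_of_nonneg_right hb1 h1d.le
        have hexp : (a/d - 1/((d:ℝ)-1)) * ((d:ℝ)-1) = a*((d:ℝ)-1)/d - 1 := by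
          field_simp
        have hda2 : a*((d:ℝ)-1)/d = a - a/d := by field_simp
        rw [hexp, hda2] at hmul
        linarith
      have hX : b * (↑d * S2) ≤ b * nT := mul_le_mul_of_nonpos_left f4 h.le
      have hY : 0 ≤ (a/d + 1 - a + ((d:ℝ)-1) * b) * S2 := mul_nonneg hbeta f1
      nlinarith [hX, hY]
  nlinarith [part1, part2]

lemma offdiag_ineq (d : ℕ) (hd : 2 ≤ d) (a b c : ℝ)
    (hpsd : (choi d (psi d (a:ℂ) (b:ℂ) (c:ℂ))).PosSemidef) (z : ℂ) :
    0 ≤ ((a:ℂ)/d) * (1 + star z * z) + (c:ℂ) * (z + star z) := by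
  have h0 : 0 < d := by omega
  have h1 : 1 < d := by omega
  set i0 : Fin d := ⟨0, h0⟩ with hi0
  set i1 : Fin d := ⟨1, h1⟩ with hi1
  have hne : i0 ≠ i1 := by simp [hi0, hi1, Fin.ext_iff]
  have hpair : ((i0,i1) : Fin d × Fin d) ≠ (i1,i0) := by
    simp only [Ne, Prod.mk.injEq, not_and]
    intro h; exact absurd h hne
  set v : Fin d × Fin d → ℂ :=
    fun p => if p = (i0,i1) then 1 else if p = (i1,i0) then z else 0 with hv
  have hvd : ∀ i : Fin d, v (i,i) = 0 := by
    intro i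
    have h1' : ((i,i) : Fin d × Fin d) ≠ (i0,i1) := by
      simp only [Ne, Prod.mk.injEq, not_and]
      intro ha hb; exact hne (ha ▸ hb ▸ rfl)
    have h2' : ((i,i) : Fin d × Fin d) ≠ (i1,i0) := by
      simp only [Ne, Prod.mk.injEq, not_and]
      intro ha hb; exact hne (hb ▸ ha ▸ rfl)
    simp [hv, h1', h2']
  have h := hpsd.dotProduct_mulVec_nonneg v
  rw [qform] at h
  have hvanish : ∀ q : Fin d × Fin d, q ≠ (i0,i1) → q ≠ (i1,i0) → v q = 0 := by
    intro q hq1 hq2; simp [hv, hq1, hq2]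
  have hA : ∑ p : Fin d × Fin d, star (v p) * v p = 1 + star z * z := by
    rw [sum_two_support (i0,i1) (i1,i0) hpair _
      (fun q hq1 hq2 => by rw [hvanish q hq1 hq2]; simp)]
    simp [hv, hpair, hpair.symm]
  have hC : ∑ p : Fin d × Fin d, star (v p) * v (p.2, p.1) = z + star z := by
    rw [sum_two_support (i0,i1) (i1,i0) hpair _
      (fun q hq1 hq2 => by rw [hvanish q hq1 hq2]; simp)]
    simp [hv, hpair, hpair.symm]
  have hB1 : ∑ i : Fin d, star (v (i,i)) = 0 :=
    Finset.sum_eq_zero fun i _ => by rw [hvd]; simp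
  have hB2 : ∑ i : Fin d, v (i,i) = 0 := Finset.sum_eq_zero fun i _ => hvd i
  have hD : ∑ i : Fin d, star (v (i,i)) * v (i,i) = 0 :=
    Finset.sum_eq_zero fun i _ => by rw [hvd]; simp
  rw [hA, hB1, hB2, hC, hD] at h
  simpa using h

lemma diag_ineq (d : ℕ) (hd : 2 ≤ d) (a b c : ℝ)
    (hpsd : (choi d (psi d (a:ℂ) (b:ℂ) (c:ℂ))).PosSemidef) :
    0 ≤ ((a:ℂ)/d) * 2 + (c:ℂ) * 2 + (1 - (a:ℂ) - b - c) * 2 := by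
  have h0 : 0 < d := by omega
  have h1 : 1 < d := by omega
  set i0 : Fin d := ⟨0, h0⟩ with hi0
  set i1 : Fin d := ⟨1, h1⟩ with hi1
  have hne : i0 ≠ i1 := by simp [hi0, hi1, Fin.ext_iff]
  have hpair : ((i0,i0) : Fin d × Fin d) ≠ (i1,i1) := by
    simp only [Ne, Prod.mk.injEq, not_and]
    intro h; exact absurd h hne
  set w : Fin d × Fin d → ℂ :=
    fun p => if p = (i0,i0) then 1 else if p = (i1,i1) then -1 else 0 with hw
  have h := hpsd.dotProduct_mulVec_nonneg w
  rw [qform] at h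
  have hvanish : ∀ q : Fin d × Fin d, q ≠ (i0,i0) → q ≠ (i1,i1) → w q = 0 := by
    intro q hq1 hq2; simp [hw, hq1, hq2]
  have hA : ∑ p : Fin d × Fin d, star (w p) * w p = 2 := by
    rw [sum_two_support (i0,i0) (i1,i1) hpair _
      (fun q hq1 hq2 => by rw [hvanish q hq1 hq2]; simp)]
    simp [hw, hpair, hpair.symm]
    ring
  have hC : ∑ p : Fin d × Fin d, star (w p) * w (p.2, p.1) = 2 := by
    rw [sum_two_support (i0,i0) (i1,i1) hpair _
      (fun q hq1 hq2 => by rw [hvanish q hq1 hq2]; simp)]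
    simp [hw, hpair, hpair.symm]
    ring
  have hwd : ∀ i : Fin d, w (i,i) = if i = i0 then 1 else if i = i1 then -1 else 0 := by
    intro i
    have e1 : ((i,i) : Fin d × Fin d) = (i0,i0) ↔ i = i0 := by
      simp [Prod.ext_iff, and_self]
    have e2 : ((i,i) : Fin d × Fin d) = (i1,i1) ↔ i = i1 := by
      simp [Prod.ext_iff, and_self]
    simp only [hw, e1, e2]
  have hvanish2 : ∀ i : Fin d, i ≠ i0 → i ≠ i1 → w (i,i) = 0 := by
    intro i h1' h2'; rw [hwd]; simp [h1', h2']
  have hB1 : ∑ i : Fin d, star (w (i,i)) = 0 := by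
    rw [sum_two_support i0 i1 hne _ (fun i h1' h2' => by rw [hvanish2 i h1' h2']; simp)]
    rw [hwd, hwd]
    simp [hne, hne.symm]
  have hB2 : ∑ i : Fin d, w (i,i) = 0 := by
    rw [sum_two_support i0 i1 hne _ (fun i h1' h2' => hvanish2 i h1' h2')]
    rw [hwd, hwd]
    simp [hne, hne.symm]
  have hD : ∑ i : Fin d, star (w (i,i)) * w (i,i) = 2 := by
    rw [sum_two_support i0 i1 hne _ (fun i h1' h2' => by rw [hvanish2 i h1' h2']; simp)]
    rw [hwd, hwd]
    simp [hne, hne.symm]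
    ring
  rw [hA, hB1, hB2, hC, hD] at h
  simpa using h

lemma ones_ineq (d : ℕ) (hd : 2 ≤ d) (a b c : ℝ)
    (hpsd : (choi d (psi d (a:ℂ) (b:ℂ) (c:ℂ))).PosSemidef) :
    0 ≤ ((a:ℂ)/d) * d + (b:ℂ) * (d * d) + (c:ℂ) * d + (1 - (a:ℂ) - b - c) * d := by
  set u : Fin d × Fin d → ℂ := fun p => if p.1 = p.2 then 1 else 0 with hu
  have h := hpsd.dotProduct_mulVec_nonneg u
  rw [qform] at h
  have hA : ∑ p : Fin d × Fin d, star (u p) * u p = (d:ℂ) := by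
    have hpt : ∀ p : Fin d × Fin d, star (u p) * u p = if p.1 = p.2 then 1 else 0 := by
      intro p; simp only [hu]; split_ifs <;> simp
    simp only [hpt]
    rw [Fintype.sum_prod_type]
    simp [Finset.sum_ite_eq]
  have hC : ∑ p : Fin d × Fin d, star (u p) * u (p.2, p.1) = (d:ℂ) := by
    have hpt : ∀ p : Fin d × Fin d, star (u p) * u (p.2,p.1) = if p.1 = p.2 then 1 else 0 := by
      intro p; obtain ⟨i, k⟩ := p
      rcases eq_or_ne i k with h' | h'
      · subst h'; simp [hu]
      · simp [hu, h']
    simp only [hpt]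
    rw [Fintype.sum_prod_type]
    simp [Finset.sum_ite_eq]
  have hB1 : ∑ i : Fin d, star (u (i,i)) = (d:ℂ) := by simp [hu]
  have hB2 : ∑ i : Fin d, u (i,i) = (d:ℂ) := by simp [hu]
  have hD : ∑ i : Fin d, star (u (i,i)) * u (i,i) = (d:ℂ) := by simp [hu]
  rw [hA, hB1, hB2, hC, hD] at h
  exact h

theorem stmt_8 (d : ℕ) (hd : 2 ≤ d) (a b c : ℝ) :
    ((choi d (psi d (a : ℂ) (b : ℂ) (c : ℂ))).PosSemidef ∧
      ∀ X : Matrix (Fin d) (Fin d) ℂ, (psi d (a : ℂ) (b : ℂ) (c : ℂ) X).trace = X.trace) ↔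
    (0 ≤ a ∧ a ≤ d / ((d : ℝ) - 1) ∧
      a / d - 1 / ((d : ℝ) - 1) ≤ b ∧ b ≤ 1 - ((d : ℝ) - 1) * a / d ∧
      -(a / d) ≤ c ∧ c ≤ a / d) := by
  have hdR : (2:ℝ) ≤ (d:ℝ) := by exact_mod_cast hd
  have dpos : (0:ℝ) < (d:ℝ) := by linarith
  have hdne : (d:ℝ) ≠ 0 := dpos.ne'
  have h1d : (0:ℝ) < (d:ℝ) - 1 := by linarith
  have had : a / (d:ℝ) * d = a := div_mul_cancel₀ a hdne
  constructor
  · rintro ⟨hpsd, -⟩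
    have hz1 := offdiag_ineq d hd a b c hpsd 1
    have hz2 := offdiag_ineq d hd a b c hpsd (-1)
    have hw := diag_ineq d hd a b c hpsd
    have hu := ones_ineq d hd a b c hpsd
    have h1 : (0:ℝ) ≤ 2*(a/d) + 2*c := by
      rw [show ((a:ℂ)/d) * (1 + star (1:ℂ) * 1) + (c:ℂ) * (1 + star (1:ℂ))
          = (((2*(a/d) + 2*c : ℝ)) : ℂ) from by
        simp only [star_one, mul_one]; push_cast; ring] at hz1
      exact Complex.zero_le_real.mp hz1
    have h2 : (0:ℝ) ≤ 2*(a/d) - 2*c := by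
      rw [show ((a:ℂ)/d) * (1 + star (-1:ℂ) * (-1)) + (c:ℂ) * ((-1) + star (-1:ℂ))
          = (((2*(a/d) - 2*c : ℝ)) : ℂ) from by
        simp only [star_neg, star_one]; push_cast; ring] at hz2
      exact Complex.zero_le_real.mp hz2
    have h3 : (0:ℝ) ≤ 2*(a/d) + 2*c + 2*(1-a-b-c) := by
      rw [show ((a:ℂ)/d) * 2 + (c:ℂ) * 2 + (1 - (a:ℂ) - b - c) * 2
          = (((2*(a/d) + 2*c + 2*(1-a-b-c) : ℝ)) : ℂ) from by push_cast; ring] at hw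
      exact Complex.zero_le_real.mp hw
    have h4 : (0:ℝ) ≤ (a/d)*d + b*(d*d) + c*d + (1-a-b-c)*d := by
      rw [show ((a:ℂ)/d) * d + (b:ℂ) * (d * d) + (c:ℂ) * d + (1 - (a:ℂ) - b - c) * d
          = ((((a/d)*d + b*(d*d) + c*d + (1-a-b-c)*d : ℝ)) : ℂ) from by push_cast; ring] at hu
      exact Complex.zero_le_real.mp hu
    have h3' : (0:ℝ) ≤ a/d + 1 - a - b := by linarith
    have hA3d : (0:ℝ) ≤ a + (d:ℝ) - a*d - b*d := by
      nlinarith [mul_nonneg h3' dpos.le, had]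
    have hA4' : (0:ℝ) ≤ a + (d:ℝ) - a*d + b*((d:ℝ)*d) - b*d := by
      nlinarith [h4, had]
    refine ⟨?_, ?_, ?_, ?_, ?_, ?_⟩
    · have haod : (0:ℝ) ≤ a/d := by linarith
      nlinarith [mul_nonneg haod dpos.le, had]
    · have h5 : (0:ℝ) ≤ (a + (d:ℝ) - a*d) * d := by
        nlinarith [mul_nonneg hA3d (by linarith : (0:ℝ) ≤ (d:ℝ) - 1), hA4']
      rw [le_div_iff₀ h1d]
      nlinarith [h5, dpos]
    · have e : a/d - 1/((d:ℝ)-1) = (a*((d:ℝ)-1) - d)/((d:ℝ)*((d:ℝ)-1)) := by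
        field_simp
      rw [e, div_le_iff₀ (mul_pos dpos h1d)]
      nlinarith [hA4']

    · have hda : ((d:ℝ)-1)*a/d = a - a/d := by field_simp
      linarith
    · linarith
    · linarith
  · rintro ⟨ha0, hau, hb1, hb2, hc1, hc2⟩
    exact ⟨psd_of d hd a b c hb1 hb2 hc1 hc2,
      fun X => psi_trace d (by omega) _ _ _ X⟩
end

section
/- Let d ≥ 3 and let ψ_{a,b,c}(X) = a(Tr X/d)Id_d + bX + cXᵀ + (1−a−b−c)diag(X) with a,b,c real. If (a,b,c) violates the inequality (d−2)a/d + b + c ≤ 1, then for the unit vector ξ = (|1⟩+|2⟩)/√2, the matrix ψ_{a,b,c}(|ξ⟩⟨ξ|) is not positive semidefinite. -/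
open Matrix ComplexOrder

theorem stmt_9 (d : ℕ) (hd : 3 ≤ d) (a b c : ℝ)
    (hviol : ¬ (((d : ℝ) - 2) * a / d + b + c ≤ 1)) :
    ¬ (psi d (a : ℂ) (b : ℂ) (c : ℂ)
        (Matrix.vecMulVec
          (fun i : Fin d =>
            if i = (⟨0, by omega⟩ : Fin d) ∨ i = (⟨1, by omega⟩ : Fin d) then
              ((Real.sqrt 2 : ℂ))⁻¹ else 0)
          (star fun i : Fin d =>
            if i = (⟨0, by omega⟩ : Fin d) ∨ i = (⟨1, by omega⟩ : Fin d) then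
              ((Real.sqrt 2 : ℂ))⁻¹ else 0))).PosSemidef := by
  intro h
  set i0 : Fin d := ⟨0, by omega⟩ with hi0
  set i1 : Fin d := ⟨1, by omega⟩ with hi1
  have hne : i0 ≠ i1 := by simp [hi0, hi1, Fin.ext_iff]
  set ξ : Fin d → ℂ := fun i =>
    if i = i0 ∨ i = i1 then ((Real.sqrt 2 : ℂ))⁻¹ else 0 with hξ
  set M : Matrix (Fin d) (Fin d) ℂ :=
    psi d (a : ℂ) (b : ℂ) (c : ℂ) (Matrix.vecMulVec ξ (star ξ)) with hM
  -- the half constant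
  have hs2 : ((Real.sqrt 2 : ℂ))⁻¹ * ((Real.sqrt 2 : ℂ))⁻¹ = 1/2 := by
    rw [← mul_inv, ← Complex.ofReal_mul, Real.mul_self_sqrt (by norm_num)]
    norm_num
  have hs : ((Real.sqrt 2 : ℂ))⁻¹ * star ((Real.sqrt 2 : ℂ))⁻¹ = 1/2 := by
    rw [star_inv₀, Complex.star_def, Complex.conj_ofReal]
    exact hs2
  -- entries of P
  set P := Matrix.vecMulVec ξ (star ξ) with hP
  have hPentry : ∀ i j, P i j = ξ i * star (ξ j) := fun i j => rfl
  have hdiag : ∀ i, P i i = if i = i0 ∨ i = i1 then 1/2 else 0 := by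
    intro i
    rw [hPentry, hξ]
    by_cases hi : i = i0 ∨ i = i1 <;> simp [hi, hs, hs2]
  have htr : P.trace = 1 := by
    rw [Matrix.trace]
    simp only [Matrix.diag]
    calc ∑ i, P i i = ∑ i, ((if i = i0 then (1/2 : ℂ) else 0) + (if i = i1 then (1/2:ℂ) else 0)) := by
          refine Finset.sum_congr rfl fun i _ => ?_
          rw [hdiag]
          by_cases h0 : i = i0
          · simp [h0, hne]
          · by_cases h1 : i = i1 <;> simp [h0, h1, Ne.symm hne]
      _ = 1 := by
          rw [Finset.sum_add_distrib, Finset.sum_ite_eq' , Finset.sum_ite_eq']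
          norm_num
  -- entries of blocks
  have hP00 : P i0 i0 = 1/2 := by rw [hdiag]; simp
  have hP11 : P i1 i1 = 1/2 := by rw [hdiag]; simp
  have hP01 : P i0 i1 = 1/2 := by rw [hPentry, hξ]; simp [hs, hs2]
  have hP10 : P i1 i0 = 1/2 := by rw [hPentry, hξ]; simp [hs, hs2]
  -- the test vector
  set x : Fin d → ℂ := Pi.single i0 1 - Pi.single i1 1 with hx
  have hq := h.dotProduct_mulVec_nonneg x
  have hdn : (d : ℂ) ≠ 0 := by
    exact_mod_cast Nat.cast_ne_zero.mpr (by omega)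
  have hform : star x ⬝ᵥ M *ᵥ x = M i0 i0 - M i0 i1 - M i1 i0 + M i1 i1 := by
    have hstar : star x = Pi.single i0 1 - Pi.single i1 1 := by
      rw [hx]
      ext i
      by_cases h0 : i = i0
      · simp [h0, hne, Pi.single_apply]
      · by_cases h1 : i = i1 <;> simp [h0, h1, Pi.single_apply]
    rw [hstar, hx, Matrix.mulVec_sub, Matrix.mulVec_single, Matrix.mulVec_single,
      sub_dotProduct, dotProduct_sub, dotProduct_sub,
      single_dotProduct, single_dotProduct,
      single_dotProduct, single_dotProduct]
    simp [Pi.sub_apply]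
    ring
  -- compute M entries
  have hMe : ∀ i j, M i j =
      (a : ℂ) * (P.trace / d) * (1 : Matrix (Fin d) (Fin d) ℂ) i j + b * P i j + c * P j i +
        (1 - a - b - c) * (if i = j then P i i else 0) := by
    intro i j
    rw [hM, psi]
    simp only [Matrix.add_apply, Matrix.smul_apply, smul_eq_mul, Matrix.transpose_apply,
      Matrix.diagonal_apply]
  have hval : star x ⬝ᵥ M *ᵥ x =
      ((2 * a / d + 1 - a - b - c : ℝ) : ℂ) := by
    rw [hform, hMe, hMe, hMe, hMe, htr, hP00, hP01, hP10, hP11]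
    simp [Matrix.one_apply, hne, hne.symm]
    field_simp
    ring
  rw [hval] at hq
  rw [Complex.zero_le_real] at hq
  push_neg at hviol
  have hdr : ((d:ℝ)) ≠ 0 := by positivity
  have hrw : ((d : ℝ) - 2) * a / d = a - 2 * a / d := by field_simp
  rw [hrw] at hviol
  linarith
end

section
/- Let d ≥ 3 and ψ_{a,b,c}(X) = a(Tr X/d)Id_d + bX + cXᵀ + (1−a−b−c)diag(X) with a,b,c real. Then ψ_{a,b,c} is a positive map (maps positive semidefinite matrices to positive semidefinite matrices) if and only if all of the following hold: (1) 0 ≤ a ≤ d/(d−1); (2) (d−2)a/d + b + c ≤ 1; (3) (d−2)a/d + |b−c| ≤ 1; (4) b + c ≥ −1/(d−1); (5) b − (d−1)c ≤ 1; (6) c − (d−1)b ≤ 1. -/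
open Matrix ComplexOrder


lemma convex_step (A b' t S m : ℝ) (hlam : (2*m-S)^2 ≤ S^2) (hS2 : 0 < S^2)
    (e1 : 0 ≤ A + t/2) (e2 : 0 ≤ A + b' + t) :
    0 ≤ A*S^2 + b'*(2*m-S)^2 + t*(m^2+(S-m)^2) := by
  have hmul : 0 ≤ S^2 * (A*S^2 + b'*(2*m-S)^2 + t*(m^2+(S-m)^2)) := by
    have id : S^2 * (A*S^2 + b'*(2*m-S)^2 + t*(m^2+(S-m)^2)) =
        (S^2 - (2*m-S)^2) * (S^2*(A + t/2)) + (2*m-S)^2 * (S^2*(A+b'+t)) := by ring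
    rw [id]
    have g1 : 0 ≤ (S^2 - (2*m-S)^2) * (S^2*(A + t/2)) :=
      mul_nonneg (sub_nonneg.mpr hlam) (mul_nonneg hS2.le e1)
    have g2 : 0 ≤ (2*m-S)^2 * (S^2*(A+b'+t)) :=
      mul_nonneg (sq_nonneg _) (mul_nonneg hS2.le e2)
    linarith
  by_contra hcon
  push_neg at hcon
  nlinarith [mul_pos hS2 (neg_pos.mpr hcon)]

set_option maxHeartbeats 1000000 in
lemma core_ineq (δ a b c S m N Z W D : ℝ)
    (hδ : 3 ≤ δ)
    (ha : 0 ≤ a) (ha2 : a ≤ δ/(δ-1))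
    (h2 : (δ-2)*a/δ + b + c ≤ 1)
    (h3 : (δ-2)*a/δ + (b - c) ≤ 1)
    (h4 : -(1/(δ-1)) ≤ b + c)
    (h5 : b - (δ-1)*c ≤ 1)
    (hS : 0 ≤ S) (hm0 : 0 ≤ m) (hmS : m ≤ S)
    (hN : S^2 ≤ N)
    (hZ0 : 0 ≤ Z) (hW0 : 0 ≤ W) (hD0 : 0 ≤ D)
    (hZ : Z ≤ S^2) (hW : W ≤ S^2)
    (hDm : D ≤ m*S) (hDm2 : D ≤ m^2 + (S-m)^2)
    (hSD : S^2 ≤ δ*D)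
    (hZm : S ≤ 2*m → (2*m-S)^2 ≤ Z)
    (hWm : S ≤ 2*m → (2*m-S)^2 ≤ W)
    (hcb : c ≤ b) :
    0 ≤ a/δ*N + b*Z + c*W + (1-a-b-c)*D := by
  have hδ0 : (0:ℝ) < δ := by linarith
  have hδ1 : (0:ℝ) < δ - 1 := by linarith
  obtain ⟨A, rfl⟩ : ∃ A, a = δ * A := ⟨a/δ, by field_simp⟩
  have hArw : δ * A / δ = A := by field_simp
  rw [hArw]
  have hA0 : 0 ≤ A := by nlinarith
  have c1 : δ * A * (δ - 1) ≤ δ := (le_div_iff₀ hδ1).mp ha2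
  have c2 : (δ-2) * A + b + c ≤ 1 := by
    have h : (δ-2) * (δ*A) / δ = (δ-2)*A := by field_simp
    linarith [h ▸ h2]
  have c3 : (δ-2) * A + (b - c) ≤ 1 := by
    have h : (δ-2) * (δ*A) / δ = (δ-2)*A := by field_simp
    linarith [h ▸ h3]
  have c4 : -1 ≤ (b+c) * (δ-1) := by
    have h1 : (1/(δ-1)) * (δ-1) = 1 := by field_simp
    nlinarith [h4]
  have e2 : 0 ≤ A + 1 - δ*A := by nlinarith
  have hN0 : 0 ≤ N := le_trans (sq_nonneg S) hN
  rcases hS.eq_or_lt with hS0 | hS0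
  · have hZe : Z = 0 := by nlinarith
    have hWe : W = 0 := by nlinarith
    have hDe : D = 0 := by nlinarith
    rw [hZe, hWe, hDe]
    have := mul_nonneg hA0 hN0
    nlinarith
  rcases le_or_gt 0 c with hc | hc
  · have hb : 0 ≤ b := le_trans hc hcb
    rcases le_or_gt 0 (1 - δ*A - b - c) with ht | ht
    · linarith [mul_nonneg hA0 hN0, mul_nonneg hb hZ0, mul_nonneg hc hW0, mul_nonneg ht hD0]
    · -- t < 0
      have e1 : 0 ≤ A + (1 - δ*A - b - c)/2 := by linarith
      rcases le_or_gt S (2*m) with hsm | hsm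
      · have hZ' := hZm hsm
        have hW' := hWm hsm
        have hlam : (2*m - S)^2 ≤ S^2 := by nlinarith [mul_nonneg hm0 (sub_nonneg.mpr hmS)]
        have key := convex_step A (b+c) (1 - δ*A - b - c) S m hlam (by positivity)
          (by linarith) (by linarith)
        linarith [key, mul_nonneg hA0 (sub_nonneg.mpr hN), mul_nonneg hb (sub_nonneg.mpr hZ'),
          mul_nonneg hc (sub_nonneg.mpr hW'),
          mul_nonneg (neg_nonneg.mpr ht.le) (sub_nonneg.mpr hDm2)]
      · have hD2 : D ≤ S^2/2 := by nlinarith [mul_le_mul_of_nonneg_right (show m ≤ S/2 by linarith) hS]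
        linarith [mul_nonneg hA0 (sub_nonneg.mpr hN), mul_nonneg hb hZ0, mul_nonneg hc hW0,
          mul_nonneg (neg_nonneg.mpr ht.le) (sub_nonneg.mpr hD2),
          mul_nonneg (sq_nonneg S) e1]
  · -- c < 0
    rcases le_or_gt 0 b with hb | hb
    · rcases le_or_gt 0 (1 - δ*A - b - c) with ht | ht
      · -- t ≥ 0 : use S² ≤ δD and h5
        have e5 : 0 ≤ 1 - b + (δ-1)*c := by linarith
        have key : 0 ≤ δ * ((A*N) + b*Z + c*W + (1 - δ*A - b - c)*D) := by
          linarith [mul_nonneg (mul_nonneg hδ0.le hA0) (sub_nonneg.mpr hN),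
            mul_nonneg (mul_nonneg hδ0.le hb) hZ0,
            mul_nonneg (mul_nonneg hδ0.le (neg_nonneg.mpr hc.le)) (sub_nonneg.mpr hW),
            mul_nonneg ht (sub_nonneg.mpr hSD),
            mul_nonneg (sq_nonneg S) e5]
        by_contra hcon
        push_neg at hcon
        linarith [key, mul_pos hδ0 (neg_pos.mpr hcon)]
      · -- t < 0
        have e1 : 0 ≤ (A + c) + (1 - δ*A - b - c)/2 := by linarith
        rcases le_or_gt S (2*m) with hsm | hsm
        · have hZ' := hZm hsm
          have hlam : (2*m - S)^2 ≤ S^2 := by nlinarith [mul_nonneg hm0 (sub_nonneg.mpr hmS)]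
          have key := convex_step (A+c) b (1 - δ*A - b - c) S m hlam (by positivity)
            (by linarith) (by linarith)
          linarith [key, mul_nonneg hA0 (sub_nonneg.mpr hN), mul_nonneg hb (sub_nonneg.mpr hZ'),
            mul_nonneg (neg_nonneg.mpr hc.le) (sub_nonneg.mpr hW),
            mul_nonneg (neg_nonneg.mpr ht.le) (sub_nonneg.mpr hDm2)]
        · have hD2 : D ≤ S^2/2 := by nlinarith [mul_le_mul_of_nonneg_right (show m ≤ S/2 by linarith) hS]
          linarith [mul_nonneg hA0 (sub_nonneg.mpr hN), mul_nonneg hb hZ0,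
            mul_nonneg (neg_nonneg.mpr hc.le) (sub_nonneg.mpr hW),
            mul_nonneg (neg_nonneg.mpr ht.le) (sub_nonneg.mpr hD2),
            mul_nonneg (sq_nonneg S) e1]
    · -- b < 0, c < 0
      rcases le_or_gt 0 (1 - δ*A - b - c) with ht | ht
      · rcases le_or_gt 0 (A + b + c) with hs | hs
        · linarith [mul_nonneg hA0 (sub_nonneg.mpr hN), mul_nonneg ht hD0,
            mul_nonneg (neg_nonneg.mpr hb.le) (sub_nonneg.mpr hZ),
            mul_nonneg (neg_nonneg.mpr hc.le) (sub_nonneg.mpr hW),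
            mul_nonneg hs (sq_nonneg S)]
        · have e4 : 0 ≤ 1 + (b+c)*(δ-1) := by linarith
          linarith [mul_nonneg hA0 (sub_nonneg.mpr hN),
            mul_nonneg (neg_nonneg.mpr hb.le) (sub_nonneg.mpr hZ),
            mul_nonneg (neg_nonneg.mpr hc.le) (sub_nonneg.mpr hW),
            mul_nonneg (neg_nonneg.mpr hs.le) (sub_nonneg.mpr hSD),
            mul_nonneg hD0 e4]
      · -- t < 0
        have hDS : D ≤ S^2 := by nlinarith [mul_le_mul_of_nonneg_right hmS hS]
        rcases le_or_gt (δ*A) 1 with h1a | h1a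
        · linarith [mul_nonneg hA0 (sub_nonneg.mpr hN),
            mul_nonneg (neg_nonneg.mpr hb.le) (sub_nonneg.mpr hZ),
            mul_nonneg (neg_nonneg.mpr hc.le) (sub_nonneg.mpr hW),
            mul_nonneg (neg_nonneg.mpr ht.le) (sub_nonneg.mpr hDS),
            mul_nonneg (sub_nonneg.mpr h1a) (sq_nonneg S)]
        · linarith [mul_nonneg (neg_nonneg.mpr hb.le) (sub_nonneg.mpr hZ),
            mul_nonneg (neg_nonneg.mpr hc.le) (sub_nonneg.mpr hW),
            mul_nonneg (neg_nonneg.mpr ht.le) (sub_nonneg.mpr hDS),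
            mul_nonneg (sub_nonneg.mpr h1a.le) (sub_nonneg.mpr hN),
            mul_nonneg e2 hN0]


noncomputable def RE (d : ℕ) (a b c : ℝ) (v η : Fin d → ℂ) : ℝ :=
  a/(d:ℝ) * ((∑ i, Complex.normSq (v i)) * (∑ i, Complex.normSq (η i)))
  + b * Complex.normSq (∑ i, (starRingEnd ℂ) (v i) * η i)
  + c * Complex.normSq (∑ i, v i * η i)
  + (1-a-b-c) * (∑ i, Complex.normSq (v i) * Complex.normSq (η i))

lemma trace_vmv (d : ℕ) (v : Fin d → ℂ) :
    (vecMulVec v (star v)).trace = ((∑ i, Complex.normSq (v i) : ℝ) : ℂ) := by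
  simp only [Matrix.trace, Matrix.diag, vecMulVec_apply, Pi.star_apply, Complex.star_def,
    Complex.mul_conj]
  push_cast
  rfl

lemma quadform (d : ℕ) (a b c : ℝ) (v η : Fin d → ℂ) :
    star η ⬝ᵥ ((psi d a b c (vecMulVec v (star v))) *ᵥ η) = ((RE d a b c v η : ℝ) : ℂ) := by
  have k1 : star η ⬝ᵥ ((1 : Matrix (Fin d) (Fin d) ℂ) *ᵥ η)
      = ((∑ i, Complex.normSq (η i) : ℝ) : ℂ) := by
    rw [Matrix.one_mulVec]
    simp only [dotProduct, Pi.star_apply, Complex.star_def]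
    push_cast
    exact Finset.sum_congr rfl fun i _ => by rw [mul_comm, Complex.mul_conj]
  have k2 : star η ⬝ᵥ ((vecMulVec v (star v)) *ᵥ η)
      = ((Complex.normSq (∑ i, (starRingEnd ℂ) (v i) * η i) : ℝ) : ℂ) := by
    have h1 : ∀ i, (vecMulVec v (star v) *ᵥ η) i = v i * ∑ j, (starRingEnd ℂ) (v j) * η j := by
      intro i
      simp only [Matrix.mulVec, dotProduct, vecMulVec_apply, Pi.star_apply, Complex.star_def]
      rw [Finset.mul_sum]
      exact Finset.sum_congr rfl fun j _ => by ring
    simp only [dotProduct, h1, Pi.star_apply, Complex.star_def]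
    rw [show ∑ i, (starRingEnd ℂ) (η i) * (v i * ∑ j, (starRingEnd ℂ) (v j) * η j)
        = (∑ i, (starRingEnd ℂ) (η i) * v i) * (∑ j, (starRingEnd ℂ) (v j) * η j) from by
      rw [Finset.sum_mul]; exact Finset.sum_congr rfl fun i _ => by ring]
    rw [Complex.normSq_eq_conj_mul_self]
    congr 1
    rw [map_sum]
    exact Finset.sum_congr rfl fun i _ => by rw [_root_.map_mul, Complex.conj_conj]; ring
  have k3 : star η ⬝ᵥ ((vecMulVec v (star v))ᵀ *ᵥ η)
      = ((Complex.normSq (∑ i, v i * η i) : ℝ) : ℂ) := by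
    have h1 : ∀ i, ((vecMulVec v (star v))ᵀ *ᵥ η) i
        = (starRingEnd ℂ) (v i) * ∑ j, v j * η j := by
      intro i
      simp only [Matrix.mulVec, dotProduct, Matrix.transpose_apply, vecMulVec_apply,
        Pi.star_apply, Complex.star_def]
      rw [Finset.mul_sum]
      exact Finset.sum_congr rfl fun j _ => by ring
    simp only [dotProduct, h1, Pi.star_apply, Complex.star_def]
    rw [show ∑ i, (starRingEnd ℂ) (η i) * ((starRingEnd ℂ) (v i) * ∑ j, v j * η j)
        = (∑ i, (starRingEnd ℂ) (η i) * (starRingEnd ℂ) (v i)) * (∑ j, v j * η j) from by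
      rw [Finset.sum_mul]; exact Finset.sum_congr rfl fun i _ => by ring]
    rw [Complex.normSq_eq_conj_mul_self]
    congr 1
    rw [map_sum]
    exact Finset.sum_congr rfl fun i _ => by rw [_root_.map_mul]; ring
  have k4 : star η ⬝ᵥ ((Matrix.diagonal (fun i => (vecMulVec v (star v)) i i)) *ᵥ η)
      = ((∑ i, Complex.normSq (v i) * Complex.normSq (η i) : ℝ) : ℂ) := by
    simp only [dotProduct, Matrix.mulVec_diagonal, vecMulVec_apply, Pi.star_apply,
      Complex.star_def]
    push_cast
    exact Finset.sum_congr rfl fun i _ => by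
      rw [show (starRingEnd ℂ) (η i) * (v i * (starRingEnd ℂ) (v i) * η i)
          = (v i * (starRingEnd ℂ) (v i)) * (η i * (starRingEnd ℂ) (η i)) from by ring,
        Complex.mul_conj, Complex.mul_conj]
  unfold psi
  rw [Matrix.add_mulVec, Matrix.add_mulVec, Matrix.add_mulVec,
    Matrix.smul_mulVec, Matrix.smul_mulVec, Matrix.smul_mulVec,
    Matrix.smul_mulVec, dotProduct_add, dotProduct_add, dotProduct_add,
    dotProduct_smul, dotProduct_smul, dotProduct_smul, dotProduct_smul,
    k1, k2, k3, k4, trace_vmv]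
  unfold RE
  simp only [smul_eq_mul]
  push_cast
  ring

lemma smul_herm (d : ℕ) (r : ℝ) {M : Matrix (Fin d) (Fin d) ℂ} (h : M.IsHermitian) :
    ((r : ℂ) • M).IsHermitian := by
  show _ᴴ = _
  rw [Matrix.conjTranspose_smul, h]
  congr 1
  simp [Complex.star_def, Complex.conj_ofReal]

lemma vmv_herm (d : ℕ) (v : Fin d → ℂ) : (vecMulVec v (star v)).IsHermitian := by
  show _ᴴ = _
  ext i j
  simp [Matrix.conjTranspose_apply, vecMulVec_apply, mul_comm]

lemma psi_herm (d : ℕ) (a b c : ℝ) (v : Fin d → ℂ) :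
    (psi d a b c (vecMulVec v (star v))).IsHermitian := by
  have hs : (a : ℂ) * ((vecMulVec v (star v)).trace / d)
      = ((a * ((∑ i, Complex.normSq (v i))/d) : ℝ) : ℂ) := by
    rw [trace_vmv]; push_cast; ring
  have h1 : (((a:ℂ) * ((vecMulVec v (star v)).trace / d)) •
      (1 : Matrix (Fin d) (Fin d) ℂ)).IsHermitian := by
    rw [hs]; exact smul_herm d _ Matrix.isHermitian_one
  have h2 : ((b:ℂ) • vecMulVec v (star v)).IsHermitian := smul_herm d b (vmv_herm d v)
  have h3 : ((c:ℂ) • (vecMulVec v (star v))ᵀ).IsHermitian :=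
    smul_herm d c (vmv_herm d v).transpose
  have h4 : ((1 - (a:ℂ) - b - c) • Matrix.diagonal
      (fun i => (vecMulVec v (star v)) i i)).IsHermitian := by
    have : (1 - (a:ℂ) - b - c) = ((1 - a - b - c : ℝ) : ℂ) := by push_cast; ring
    rw [this]
    refine smul_herm d _ (Matrix.isHermitian_diagonal_iff.mpr fun i => ?_)
    show star _ = _
    simp [vecMulVec_apply, Complex.star_def, mul_comm]
  exact ((h1.add h2).add h3).add h4

lemma psi_sum (d : ℕ) (a b c : ℂ) {ι : Type*} (s : Finset ι)
    (f : ι → Matrix (Fin d) (Fin d) ℂ) :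
    psi d a b c (∑ k ∈ s, f k) = ∑ k ∈ s, psi d a b c (f k) := by
  unfold psi
  rw [Matrix.trace_sum, Matrix.transpose_sum]
  have e1 : (a * ((∑ k ∈ s, (f k).trace) / d)) • (1 : Matrix (Fin d) (Fin d) ℂ)
      = ∑ k ∈ s, (a * ((f k).trace / d)) • (1 : Matrix (Fin d) (Fin d) ℂ) := by
    rw [← Finset.sum_smul]
    congr 1
    rw [Finset.sum_div, Finset.mul_sum]
  have e2 : b • (∑ k ∈ s, f k) = ∑ k ∈ s, b • f k := Finset.smul_sum
  have e3 : c • (∑ k ∈ s, (f k)ᵀ) = ∑ k ∈ s, c • (f k)ᵀ := Finset.smul_sum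
  have e4 : (1 - a - b - c) • Matrix.diagonal (fun i => (∑ k ∈ s, f k) i i)
      = ∑ k ∈ s, (1 - a - b - c) • Matrix.diagonal (fun i => (f k) i i) := by
    rw [← Finset.smul_sum]
    congr 1
    ext i j
    simp only [Matrix.diagonal_apply, Matrix.sum_apply]
    split_ifs with h
    · rfl
    · simp
  rw [e1, e2, e3, e4, ← Finset.sum_add_distrib, ← Finset.sum_add_distrib,
    ← Finset.sum_add_distrib]

lemma psd_decomp {d : ℕ} {X : Matrix (Fin d) (Fin d) ℂ} (hX : X.PosSemidef) :
    ∃ v : Fin d → (Fin d → ℂ), X = ∑ k, vecMulVec (v k) (star (v k)) := by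
  obtain ⟨B, rfl⟩ : ∃ B : Matrix (Fin d) (Fin d) ℂ, X = Bᴴ * B := by
    open MatrixOrder in
    exact CStarAlgebra.nonneg_iff_eq_star_mul_self.mp (Matrix.nonneg_iff_posSemidef.mpr hX)
  refine ⟨fun k i => star (B k i), ?_⟩
  ext i j
  simp only [Matrix.mul_apply, Matrix.conjTranspose_apply, Matrix.sum_apply,
    vecMulVec_apply, Pi.star_apply]
  exact Finset.sum_congr rfl fun k _ => by simp

lemma core_symm (δ a b c S m N Z W D : ℝ)
    (hδ : 3 ≤ δ) (ha : 0 ≤ a) (ha2 : a ≤ δ/(δ-1))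
    (h2 : (δ-2)*a/δ + b + c ≤ 1)
    (h3 : (δ-2)*a/δ + (b - c) ≤ 1)
    (h3' : (δ-2)*a/δ + (c - b) ≤ 1)
    (h4 : -(1/(δ-1)) ≤ b + c)
    (h5 : b - (δ-1)*c ≤ 1)
    (h6 : c - (δ-1)*b ≤ 1)
    (hS : 0 ≤ S) (hm0 : 0 ≤ m) (hmS : m ≤ S)
    (hN : S^2 ≤ N)
    (hZ0 : 0 ≤ Z) (hW0 : 0 ≤ W) (hD0 : 0 ≤ D)
    (hZ : Z ≤ S^2) (hW : W ≤ S^2)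
    (hDm : D ≤ m*S) (hDm2 : D ≤ m^2 + (S-m)^2)
    (hSD : S^2 ≤ δ*D)
    (hZm : S ≤ 2*m → (2*m-S)^2 ≤ Z)
    (hWm : S ≤ 2*m → (2*m-S)^2 ≤ W) :
    0 ≤ a/δ*N + b*Z + c*W + (1-a-b-c)*D := by
  rcases le_total c b with hcb | hbc
  · exact core_ineq δ a b c S m N Z W D hδ ha ha2 h2 h3 h4 h5 hS hm0 hmS hN hZ0 hW0 hD0
      hZ hW hDm hDm2 hSD hZm hWm hcb
  · have := core_ineq δ a c b S m N W Z D hδ ha ha2 (by linarith) h3'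
      (by linarith) h6 hS hm0 hmS hN hW0 hZ0 hD0 hW hZ hDm hDm2 hSD hWm hZm hbc
    linarith

lemma abs_sum_lower {d : ℕ} (z : Fin d → ℂ) (j₀ : Fin d) :
    ‖z j₀‖ - ∑ i ∈ Finset.univ.erase j₀, ‖z i‖
      ≤ ‖∑ i, z i‖ := by
  have hsplit : z j₀ = (∑ i, z i) - ∑ i ∈ Finset.univ.erase j₀, z i := by
    rw [← Finset.add_sum_erase _ z (Finset.mem_univ j₀)]; ring
  have h1 : ‖z j₀‖ ≤ ‖∑ i, z i‖
      + ‖∑ i ∈ Finset.univ.erase j₀, z i‖ := by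
    rw [hsplit, sub_eq_add_neg]
    refine le_trans (norm_add_le _ _) ?_
    rw [norm_neg]
  have h2 : ‖∑ i ∈ Finset.univ.erase j₀, z i‖
      ≤ ∑ i ∈ Finset.univ.erase j₀, ‖z i‖ := norm_sum_le _ _
  linarith

lemma sum_sq_le_sq_sum {d : ℕ} (s : Finset (Fin d)) (f : Fin d → ℝ) (hf : ∀ i, 0 ≤ f i) :
    ∑ i ∈ s, (f i)^2 ≤ (∑ i ∈ s, f i)^2 := by
  have h : ∀ i ∈ s, (f i)^2 ≤ f i * ∑ j ∈ s, f j := fun i hi => by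
    rw [sq]
    exact mul_le_mul_of_nonneg_left (Finset.single_le_sum (fun j _ => hf j) hi) (hf i)
  calc ∑ i ∈ s, (f i)^2 ≤ ∑ i ∈ s, f i * ∑ j ∈ s, f j := Finset.sum_le_sum h
    _ = (∑ i ∈ s, f i)^2 := by rw [← Finset.sum_mul, sq]

lemma quad_nonneg (d : ℕ) (hd : 3 ≤ d) (a b c : ℝ)
    (c1 : 0 ≤ a) (c1' : a ≤ d / ((d : ℝ) - 1))
    (c2 : ((d : ℝ) - 2) * a / d + b + c ≤ 1)
    (c3 : ((d : ℝ) - 2) * a / d + |b - c| ≤ 1)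
    (c4 : -(1 / ((d : ℝ) - 1)) ≤ b + c)
    (c5 : b - ((d : ℝ) - 1) * c ≤ 1)
    (c6 : c - ((d : ℝ) - 1) * b ≤ 1)
    (v η : Fin d → ℂ) : 0 ≤ RE d a b c v η := by
  set δ : ℝ := (d : ℝ) with hδdef
  have hδ : (3:ℝ) ≤ δ := by rw [hδdef]; exact_mod_cast hd
  set r : Fin d → ℝ := fun i => ‖v i‖ * ‖η i‖ with hr
  have hr0 : ∀ i, 0 ≤ r i := fun i => mul_nonneg (norm_nonneg _) (norm_nonneg _)
  set S : ℝ := ∑ i, r i with hS_def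
  have hS : 0 ≤ S := Finset.sum_nonneg fun i _ => hr0 i
  -- max element
  have hne : (Finset.univ : Finset (Fin d)).Nonempty := ⟨⟨0, by omega⟩, Finset.mem_univ _⟩
  obtain ⟨j₀, -, hmax⟩ := Finset.exists_max_image Finset.univ r hne
  set m : ℝ := r j₀ with hm_def
  have hm0 : 0 ≤ m := hr0 j₀
  have hmS : m ≤ S := Finset.single_le_sum (fun i _ => hr0 i) (Finset.mem_univ j₀)
  set z : Fin d → ℂ := fun i => (starRingEnd ℂ) (v i) * η i with hz
  set w : Fin d → ℂ := fun i => v i * η i with hw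
  have habsz : ∀ i, ‖z i‖ = r i := fun i => by
    simp [hz, hr, _root_.map_mul, Complex.norm_conj]
  have habsw : ∀ i, ‖w i‖ = r i := fun i => by simp [hw, hr, _root_.map_mul]
  set N : ℝ := (∑ i, Complex.normSq (v i)) * (∑ i, Complex.normSq (η i)) with hN_def
  set Z : ℝ := Complex.normSq (∑ i, z i) with hZ_def
  set W : ℝ := Complex.normSq (∑ i, w i) with hW_def
  set D : ℝ := ∑ i, Complex.normSq (v i) * Complex.normSq (η i) with hD_def
  have hDr : D = ∑ i, (r i)^2 := by
    refine Finset.sum_congr rfl fun i _ => ?_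
    rw [hr, mul_pow, Complex.sq_norm, Complex.sq_norm]
  have hN : S^2 ≤ N := by
    have := Finset.sum_mul_sq_le_sq_mul_sq Finset.univ (fun i => ‖v i‖)
      (fun i => ‖η i‖)
    calc S^2 = (∑ i, ‖v i‖ * ‖η i‖)^2 := by rw [hS_def]
      _ ≤ (∑ i, ‖v i‖^2) * (∑ i, ‖η i‖^2) := this
      _ = N := by rw [hN_def]; congr 1 <;> exact Finset.sum_congr rfl fun i _ => (Complex.sq_norm _)
  have habsZ : ‖∑ i, z i‖ ≤ S := by
    refine le_trans (norm_sum_le _ _) ?_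
    rw [hS_def]
    exact le_of_eq (Finset.sum_congr rfl fun i _ => habsz i)
  have habsW : ‖∑ i, w i‖ ≤ S := by
    refine le_trans (norm_sum_le _ _) ?_
    rw [hS_def]
    exact le_of_eq (Finset.sum_congr rfl fun i _ => habsw i)
  have hZS : Z ≤ S^2 := by
    rw [hZ_def, ← Complex.sq_norm]
    exact pow_le_pow_left₀ (norm_nonneg _) habsZ 2
  have hWS : W ≤ S^2 := by
    rw [hW_def, ← Complex.sq_norm]
    exact pow_le_pow_left₀ (norm_nonneg _) habsW 2
  have hDm : D ≤ m * S := by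
    rw [hDr, hS_def, Finset.mul_sum]
    exact Finset.sum_le_sum fun i _ => by
      rw [sq]; exact mul_le_mul_of_nonneg_right (hmax i (Finset.mem_univ i)) (hr0 i)
  have hsum_erase : ∑ i ∈ Finset.univ.erase j₀, r i = S - m := by
    have := Finset.add_sum_erase Finset.univ r (Finset.mem_univ j₀)
    rw [hS_def, hm_def]; linarith [this]
  have hDm2 : D ≤ m^2 + (S - m)^2 := by
    rw [hDr, ← Finset.add_sum_erase Finset.univ (fun i => (r i)^2) (Finset.mem_univ j₀)]
    have := sum_sq_le_sq_sum (Finset.univ.erase j₀) r hr0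
    rw [hsum_erase] at this
    exact add_le_add_right this _ |>.trans (by rw [hm_def])
  have hSD : S^2 ≤ δ * D := by
    have := Finset.sum_mul_sq_le_sq_mul_sq Finset.univ r (fun _ => (1:ℝ))
    simp only [mul_one, one_pow] at this
    rw [Finset.sum_const, Finset.card_univ, Fintype.card_fin, nsmul_eq_mul, mul_one] at this
    rw [hS_def, hDr] at *
    calc (∑ i, r i)^2 ≤ (∑ i, (r i)^2) * d := this
      _ = δ * ∑ i, (r i)^2 := by rw [hδdef]; ring
  have hlower : ∀ (u : Fin d → ℂ), (∀ i, ‖u i‖ = r i) →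
      (S ≤ 2*m → (2*m - S)^2 ≤ Complex.normSq (∑ i, u i)) := by
    intro u hu hsm
    have h1 := abs_sum_lower u j₀
    have h2 : ∑ i ∈ Finset.univ.erase j₀, ‖u i‖ = S - m := by
      rw [← hsum_erase]
      exact Finset.sum_congr rfl fun i _ => hu i
    rw [hu j₀, h2, ← hm_def] at h1
    have h3 : 2*m - S ≤ ‖∑ i, u i‖ := by linarith
    rw [← Complex.sq_norm]
    exact pow_le_pow_left₀ (by linarith) h3 2
  have key := core_symm δ a b c S m N Z W D hδ c1 c1' c2
    (by linarith [le_abs_self (b - c)])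
    (by linarith [neg_abs_le (b - c)])
    c4 c5 c6 hS hm0 hmS hN (Complex.normSq_nonneg _) (Complex.normSq_nonneg _)
    (Finset.sum_nonneg fun i _ => mul_nonneg (Complex.normSq_nonneg _) (Complex.normSq_nonneg _))
    hZS hWS hDm hDm2 hSD (hlower z habsz) (hlower w habsw)
  unfold RE
  exact key

noncomputable def tv (d : ℕ) (p q : ℂ) : Fin d → ℂ :=
  fun i => if (i:ℕ) = 0 then p else if (i:ℕ) = 1 then q else 0

lemma sum_two {M : Type*} [AddCommMonoid M] {d : ℕ} (hd : 3 ≤ d) (f : Fin d → M)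
    (h : ∀ i : Fin d, (i:ℕ) ≠ 0 → (i:ℕ) ≠ 1 → f i = 0) :
    ∑ i, f i = f ⟨0, by omega⟩ + f ⟨1, by omega⟩ := by
  have hne : (⟨0, by omega⟩ : Fin d) ≠ ⟨1, by omega⟩ := by simp [Fin.ext_iff]
  rw [← Finset.sum_pair hne]
  refine (Finset.sum_subset (Finset.subset_univ _) ?_).symm
  intro x _ hx
  simp only [Finset.mem_insert, Finset.mem_singleton] at hx
  push_neg at hx
  exact h x (by simpa [Fin.ext_iff] using hx.1) (by simpa [Fin.ext_iff] using hx.2)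

lemma RE_two (d : ℕ) (hd : 3 ≤ d) (a b c : ℝ) (p q s t : ℂ) :
    RE d a b c (tv d p q) (tv d s t) =
      a/(d:ℝ) * ((Complex.normSq p + Complex.normSq q) * (Complex.normSq s + Complex.normSq t))
      + b * Complex.normSq ((starRingEnd ℂ) p * s + (starRingEnd ℂ) q * t)
      + c * Complex.normSq (p*s + q*t)
      + (1-a-b-c) * (Complex.normSq p * Complex.normSq s
          + Complex.normSq q * Complex.normSq t) := by
  unfold RE tv
  rw [sum_two hd _ (fun i h0 h1 => by simp [h0, h1]),
      sum_two hd _ (fun i h0 h1 => by simp [h0, h1]),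
      sum_two hd _ (fun i h0 h1 => by simp [h0, h1]),
      sum_two hd _ (fun i h0 h1 => by simp [h0, h1]),
      sum_two hd _ (fun i h0 h1 => by simp [h0, h1])]
  norm_num

lemma conds_of_RE (d : ℕ) (hd : 3 ≤ d) (a b c : ℝ)
    (Q : ∀ v η : Fin d → ℂ, 0 ≤ RE d a b c v η) :
    (0 ≤ a ∧ a ≤ d / ((d : ℝ) - 1) ∧
      ((d : ℝ) - 2) * a / d + b + c ≤ 1 ∧
      ((d : ℝ) - 2) * a / d + |b - c| ≤ 1) := by
  set δ : ℝ := (d : ℝ) with hδdef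
  have hδ : (3:ℝ) ≤ δ := by rw [hδdef]; exact_mod_cast hd
  have hδ0 : (0:ℝ) < δ := by linarith
  have hδ1 : (0:ℝ) < δ - 1 := by linarith
  have key : (δ-2)*a/δ = a - 2*(a/δ) := by field_simp
  have haδ : δ * (a/δ) = a := by field_simp
  -- T1 : a ≥ 0
  have T1 : 0 ≤ a/δ := by
    have := Q (tv d 1 0) (tv d 0 1)
    rw [RE_two d hd] at this
    simpa using this
  have g1 : 0 ≤ a := by nlinarith [T1]
  -- T2 : a ≤ δ/(δ-1)
  have T2 : 0 ≤ a/δ + 1 - a := by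
    have := Q (tv d 1 0) (tv d 1 0)
    rw [RE_two d hd] at this
    simp at this
    linarith
  have g2 : a ≤ δ/(δ-1) := by
    rw [le_div_iff₀ hδ1]
    nlinarith [T2]
  -- T3 : cond 2
  have T3 : 0 ≤ 2*(a/δ) + 1 - a - b - c := by
    have := Q (tv d 1 1) (tv d 1 (-1))
    rw [RE_two d hd] at this
    simp at this
    nlinarith [this]
  have g3 : (δ-2)*a/δ + b + c ≤ 1 := by rw [key]; linarith
  -- T4 : b - c direction
  have T4 : 0 ≤ 2*(a/δ) + 2*c + 1 - a - b - c := by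
    have := Q (tv d 1 Complex.I) (tv d 1 (-Complex.I))
    rw [RE_two d hd] at this
    simp [Complex.normSq_apply] at this
    nlinarith [this]
  -- T5 : c - b direction
  have T5 : 0 ≤ 2*(a/δ) + 2*b + 1 - a - b - c := by
    have := Q (tv d 1 Complex.I) (tv d 1 Complex.I)
    rw [RE_two d hd] at this
    simp [Complex.normSq_apply] at this
    nlinarith [this]
  have g4 : (δ-2)*a/δ + |b - c| ≤ 1 := by
    rw [key]
    rcases abs_cases (b - c) with ⟨h, -⟩ | ⟨h, -⟩ <;> rw [h] <;> linarith
  exact ⟨g1, g2, g3, g4⟩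

lemma omega_facts (d : ℕ) (hd : 3 ≤ d) :
    ∃ ω : ℂ, Complex.normSq ω = 1 ∧ ω ^ d = 1 ∧ ∑ i : Fin d, (ω^2)^(i:ℕ) = 0 := by
  have hd0 : d ≠ 0 := by omega
  set ω : ℂ := Complex.exp (2 * ↑Real.pi * Complex.I / d) with hω_def
  have hω : IsPrimitiveRoot ω d := Complex.isPrimitiveRoot_exp d hd0
  have habs : ‖ω‖ = 1 := by
    rw [hω_def, Complex.norm_exp]
    have : (2 * ↑Real.pi * Complex.I / (d:ℂ)).re = 0 := by
      simp [Complex.div_re, Complex.mul_re, Complex.mul_im, Complex.I_re, Complex.I_im]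
    rw [this, Real.exp_zero]
  have hnormSq : Complex.normSq ω = 1 := by rw [Complex.normSq_eq_norm_sq, habs, one_pow]
  have hne2 : ω^2 ≠ 1 := hω.pow_ne_one_of_pos_of_lt (by norm_num) (by omega)
  refine ⟨ω, hnormSq, hω.pow_eq_one, ?_⟩
  rw [Fin.sum_univ_eq_sum_range (fun k => (ω^2)^k) d, geom_sum_eq hne2 d]
  have : (ω^2)^d = 1 := by
    rw [← pow_mul, mul_comm, pow_mul, hω.pow_eq_one, one_pow]
  rw [this, sub_self, zero_div]


lemma conds_of_RE2 (d : ℕ) (hd : 3 ≤ d) (a b c : ℝ)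
    (Q : ∀ v η : Fin d → ℂ, 0 ≤ RE d a b c v η) :
    (-(1 / ((d : ℝ) - 1)) ≤ b + c ∧
      b - ((d : ℝ) - 1) * c ≤ 1 ∧
      c - ((d : ℝ) - 1) * b ≤ 1) := by
  have hδ : (3:ℝ) ≤ (d:ℝ) := by exact_mod_cast hd
  have hδ0 : (0:ℝ) < (d:ℝ) := by linarith
  have hδ1 : (0:ℝ) < (d:ℝ) - 1 := by linarith
  have h6' : a/(d:ℝ)*((d:ℝ)*(d:ℝ)) = a*(d:ℝ) := by field_simp
  -- T6
  have T6 : 0 ≤ a*(d:ℝ) + (b+c)*((d:ℝ)*(d:ℝ)) + (1-a-b-c)*(d:ℝ) := by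
    have := Q (fun _ => 1) (fun _ => 1)
    unfold RE at this
    simp only [RingHom.map_one, one_mul, mul_one, Complex.normSq_one, Finset.sum_const,
      Finset.card_univ, Fintype.card_fin, nsmul_eq_mul, Complex.normSq_natCast] at this
    nlinarith [this, h6']
  have g5 : -(1 / ((d:ℝ) - 1)) ≤ b + c := by
    have h1 : 0 ≤ (d:ℝ) * (1 + (b+c)*((d:ℝ)-1)) := by nlinarith [T6]
    have h2 : 0 ≤ 1 + (b+c)*((d:ℝ)-1) := (mul_nonneg_iff_of_pos_left hδ0).mp h1
    rw [neg_le, ← sub_nonneg]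
    have h3 : 1/((d:ℝ)-1) - -(b+c) = (1 + (b+c)*((d:ℝ)-1))/((d:ℝ)-1) := by field_simp; ring
    rw [h3]
    positivity
  -- T7 / T8 with roots of unity
  obtain ⟨ω, hn1, hpow, hgeom⟩ := omega_facts d hd
  have habsk : ∀ k : ℕ, Complex.normSq (ω^k) = 1 := fun k => by
    rw [map_pow, hn1, one_pow]
  have hzsum : ∑ i : Fin d, (starRingEnd ℂ) (ω^(i:ℕ)) * (starRingEnd ℂ) (ω^(i:ℕ))
      = (starRingEnd ℂ) (∑ i : Fin d, (ω^2)^(i:ℕ)) := by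
    rw [map_sum]
    refine Finset.sum_congr rfl fun i _ => ?_
    rw [← _root_.map_mul, ← pow_add, ← pow_mul, two_mul]
  have honec : ∀ k : ℕ, ω^k * (starRingEnd ℂ) (ω^k) = 1 := fun k => by
    rw [Complex.mul_conj, habsk, Complex.ofReal_one]
  -- T7 : v = ω^k, η = conj (ω^k)
  have T7 : 0 ≤ a*(d:ℝ) + c*((d:ℝ)*(d:ℝ)) + (1-a-b-c)*(d:ℝ) := by
    have := Q (fun i => ω^(i:ℕ)) (fun i => (starRingEnd ℂ) (ω^(i:ℕ)))
    unfold RE at this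
    simp only [Complex.normSq_conj, habsk, Finset.sum_const, Finset.card_univ,
      Fintype.card_fin, nsmul_eq_mul, mul_one, one_mul] at this
    rw [hzsum, hgeom, map_zero, Complex.normSq_zero] at this
    rw [show ∑ i : Fin d, ω^(i:ℕ) * (starRingEnd ℂ) (ω^(i:ℕ)) = ((d:ℕ):ℂ) by
      simp only [honec]; rw [Finset.sum_const, Finset.card_univ, Fintype.card_fin,
        nsmul_eq_mul, mul_one]] at this
    rw [Complex.normSq_natCast] at this
    nlinarith [this, h6']
  have g6 : b - ((d:ℝ)-1)*c ≤ 1 := by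
    have h1 : 0 ≤ (d:ℝ) * (1 - b + ((d:ℝ)-1)*c) := by nlinarith [T7]
    have h2 := (mul_nonneg_iff_of_pos_left hδ0).mp h1
    linarith
  -- T8 : v = η = ω^k
  have hwsum : ∑ i : Fin d, ω^(i:ℕ) * ω^(i:ℕ) = 0 := by
    rw [← hgeom]
    refine Finset.sum_congr rfl fun i _ => ?_
    rw [← pow_add, ← pow_mul, two_mul]
  have T8 : 0 ≤ a*(d:ℝ) + b*((d:ℝ)*(d:ℝ)) + (1-a-b-c)*(d:ℝ) := by
    have := Q (fun i => ω^(i:ℕ)) (fun i => ω^(i:ℕ))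
    unfold RE at this
    simp only [habsk, Finset.sum_const, Finset.card_univ,
      Fintype.card_fin, nsmul_eq_mul, mul_one, one_mul] at this
    rw [hwsum, Complex.normSq_zero] at this
    rw [show ∑ i : Fin d, (starRingEnd ℂ) (ω^(i:ℕ)) * ω^(i:ℕ) = ((d:ℕ):ℂ) by
      refine Eq.trans (Finset.sum_congr rfl fun i _ => mul_comm _ _) ?_
      simp only [honec]; rw [Finset.sum_const, Finset.card_univ, Fintype.card_fin,
        nsmul_eq_mul, mul_one]] at this
    rw [Complex.normSq_natCast] at this
    nlinarith [this, h6']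
  have g7 : c - ((d:ℝ)-1)*b ≤ 1 := by
    have h1 : 0 ≤ (d:ℝ) * (1 - c + ((d:ℝ)-1)*b) := by nlinarith [T8]
    have h2 := (mul_nonneg_iff_of_pos_left hδ0).mp h1
    linarith
  exact ⟨g5, g6, g7⟩

lemma vmv_psd (d : ℕ) (hd : 3 ≤ d) (v : Fin d → ℂ) :
    (Matrix.vecMulVec v (star v)).PosSemidef := by
  suffices hB : ∃ B : Matrix (Fin d) (Fin d) ℂ, Matrix.vecMulVec v (star v) = Bᴴ * B by
    obtain ⟨B, hB⟩ := hB; rw [hB]; exact Matrix.posSemidef_conjTranspose_mul_self B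
  have h3 : 0 < d := by omega
  refine ⟨Matrix.of fun k j => if (k:ℕ) = 0 then star (v j) else 0, ?_⟩
  ext i j
  simp only [Matrix.mul_apply, Matrix.conjTranspose_apply, Matrix.of_apply,
    vecMulVec_apply, Pi.star_apply]
  rw [Finset.sum_eq_single (⟨0, h3⟩ : Fin d)]
  · simp
  · intro k _ hk
    have : (k:ℕ) ≠ 0 := by simpa [Fin.ext_iff] using hk
    simp [this]
  · simp

lemma quad_necc (d : ℕ) (hd : 3 ≤ d) (a b c : ℝ)
    (h : ∀ X : Matrix (Fin d) (Fin d) ℂ, X.PosSemidef →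
        (psi d (a : ℂ) (b : ℂ) (c : ℂ) X).PosSemidef) :
    ∀ v η : Fin d → ℂ, 0 ≤ RE d a b c v η := by
  intro v η
  have hp := (h _ (vmv_psd d hd v)).dotProduct_mulVec_nonneg η
  rw [quadform] at hp
  exact Complex.zero_le_real.mp hp

theorem stmt_10 (d : ℕ) (hd : 3 ≤ d) (a b c : ℝ) :
    (∀ X : Matrix (Fin d) (Fin d) ℂ, X.PosSemidef →
        (psi d (a : ℂ) (b : ℂ) (c : ℂ) X).PosSemidef) ↔
    (0 ≤ a ∧ a ≤ d / ((d : ℝ) - 1) ∧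
      ((d : ℝ) - 2) * a / d + b + c ≤ 1 ∧
      ((d : ℝ) - 2) * a / d + |b - c| ≤ 1 ∧
      -(1 / ((d : ℝ) - 1)) ≤ b + c ∧
      b - ((d : ℝ) - 1) * c ≤ 1 ∧
      c - ((d : ℝ) - 1) * b ≤ 1) := by
  constructor
  · intro h
    have Q := quad_necc d hd a b c h
    obtain ⟨g1, g2, g3, g4⟩ := conds_of_RE d hd a b c Q
    obtain ⟨g5, g6, g7⟩ := conds_of_RE2 d hd a b c Q
    exact ⟨g1, g2, g3, g4, g5, g6, g7⟩
  · rintro ⟨c1, c2, c3, c4, c5, c6, c7⟩ X hX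
    obtain ⟨w, hw⟩ := psd_decomp hX
    rw [hw, psi_sum]
    refine Finset.sum_induction _ _ (fun A B hA hB => hA.add hB)
      Matrix.PosSemidef.zero (fun k _ => ?_)
    exact Matrix.PosSemidef.of_dotProduct_mulVec_nonneg (psi_herm d a b c (w k)) fun x => by
      rw [quadform]
      exact Complex.zero_le_real.mpr
        (quad_nonneg d hd a b c c1 c2 c3 c4 c5 c6 c7 (w k) x)
end
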